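/- arXiv:2407.07737 — 5 statements merged into one kernel-verified Lean document; each statement's English description precedes it below -/
import Mathlib

section
/- Rényi divergence of shifted Gaussians: for μ ∈ ℝ, σ > 0, and α > 1, the α-Rényi divergence R_α(N(μ, σ²), N(0, σ²)) equals α μ²/(2σ²). -/
open MeasureTheory ProbabilityTheory
open scoped NNReal ENNReal

/-- Rényi divergence of shifted Gaussians:
`R_α(N(μ, σ²), N(0, σ²)) = α μ² / (2 σ²)` for `α > 1`. -/
theorem renyi_gaussian_shift (μ σ : ℝ) (hσ : 0 < σ) (α : ℝ) (hα : 1 < α) :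
    (1 / (α - 1)) * Real.log (∫ x,
        (gaussianPDFReal μ ⟨σ ^ 2, sq_nonneg σ⟩ x /
          gaussianPDFReal 0 ⟨σ ^ 2, sq_nonneg σ⟩ x) ^ α
        ∂(gaussianReal 0 ⟨σ ^ 2, sq_nonneg σ⟩)) =
      α * μ ^ 2 / (2 * σ ^ 2) := by
  set v : ℝ≥0 := ⟨σ ^ 2, sq_nonneg σ⟩ with hvdef
  have hσ2 : (0 : ℝ) < σ ^ 2 := by positivity
  have hvr : (v : ℝ) = σ ^ 2 := rfl
  have hv0 : v ≠ 0 := by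
    intro h
    have : (v : ℝ) = 0 := by rw [h]; simp
    rw [hvr] at this
    exact hσ2.ne' this
  set C : ℝ := (α * α - α) * μ ^ 2 / (2 * σ ^ 2) with hC
  -- pointwise identity
  have hpt : ∀ x : ℝ, gaussianPDFReal 0 v x *
      (gaussianPDFReal μ v x / gaussianPDFReal 0 v x) ^ α
      = Real.exp C * gaussianPDFReal (α * μ) v x := by
    intro x
    have hN : (0 : ℝ) < (Real.sqrt (2 * Real.pi * v))⁻¹ := by
      rw [hvr]
      positivity
    simp only [gaussianPDFReal]
    rw [mul_div_mul_left _ _ hN.ne', ← Real.exp_sub,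
      Real.rpow_def_of_pos (Real.exp_pos _), Real.log_exp]
    rw [mul_left_comm (Real.exp _), ← Real.exp_add,
      mul_assoc, ← Real.exp_add]
    congr 2
    rw [hvr, hC]
    field_simp
    ring
  have hint : (∫ x, (gaussianPDFReal μ v x / gaussianPDFReal 0 v x) ^ α
      ∂(gaussianReal 0 v)) = Real.exp C := by
    rw [gaussianReal_of_var_ne_zero 0 hv0]
    have hmeas : Measurable fun x => (gaussianPDFReal 0 v x).toNNReal :=
      (measurable_gaussianPDFReal 0 v).real_toNNReal
    have : gaussianPDF 0 v = fun x => ((gaussianPDFReal 0 v x).toNNReal : ℝ≥0∞) := by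
      funext x
      rfl
    rw [this, integral_withDensity_eq_integral_smul hmeas]
    have heq : ∀ x : ℝ, ((gaussianPDFReal 0 v x).toNNReal : ℝ≥0) •
        ((gaussianPDFReal μ v x / gaussianPDFReal 0 v x) ^ α)
        = Real.exp C * gaussianPDFReal (α * μ) v x := by
      intro x
      rw [NNReal.smul_def, smul_eq_mul,
        Real.coe_toNNReal _ (gaussianPDFReal_nonneg 0 v x)]
      exact hpt x
    rw [integral_congr_ae (ae_of_all _ heq), integral_const_mul,
      integral_gaussianPDFReal_eq_one _ hv0, mul_one]
  rw [hint, Real.log_exp, hC]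
  have hα1 : α - 1 ≠ 0 := by linarith
  field_simp
end

section
/- Closed-form Rényi divergence of a Bernoulli-mixture-of-Gaussians versus a Gaussian: for integer α > 1, p ∈ [0,1], and σ > 0, exp((α−1) R_α(N(Bern(p), σ²), N(0, σ²))) = E_{c_1,…,c_α i.i.d. Bern(p)}[ exp( (Σ_{i≠i'} c_i c_{i'}) / (2σ²) ) ], where N(Bern(p), σ²) denotes the mixture (1−p)·N(0,σ²) + p·N(1,σ²). -/
open MeasureTheory ProbabilityTheory Real

section RenyiAux
variable {σ : ℝ}

lemma renyi_pdf_eq (σ μ x : ℝ) : gaussianPDFReal μ ⟨σ ^ 2, sq_nonneg σ⟩ x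
    = (√(2 * π * σ ^ 2))⁻¹ * Real.exp (-(x - μ) ^ 2 / (2 * σ ^ 2)) := rfl

lemma renyi_vne (hσ : 0 < σ) : (⟨σ ^ 2, sq_nonneg σ⟩ : NNReal) ≠ 0 := by
  intro h
  have : σ ^ 2 = 0 := congrArg NNReal.toReal h
  nlinarith

lemma renyi_pdf_mul_exp (hσ : 0 < σ) (t x : ℝ) :
    gaussianPDFReal 0 ⟨σ ^ 2, sq_nonneg σ⟩ x * Real.exp (t * x)
      = Real.exp (σ ^ 2 * t ^ 2 / 2) * gaussianPDFReal (σ ^ 2 * t) ⟨σ ^ 2, sq_nonneg σ⟩ x := by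
  have hσ2 : (0:ℝ) < σ ^ 2 := by positivity
  simp only [renyi_pdf_eq, sub_zero]
  rw [mul_assoc, ← Real.exp_add,
    show Real.exp (σ ^ 2 * t ^ 2 / 2) * ((√(2 * π * σ ^ 2))⁻¹ *
        Real.exp (-(x - σ ^ 2 * t) ^ 2 / (2 * σ ^ 2)))
      = (√(2 * π * σ ^ 2))⁻¹ * (Real.exp (σ ^ 2 * t ^ 2 / 2) *
        Real.exp (-(x - σ ^ 2 * t) ^ 2 / (2 * σ ^ 2))) from by ring,
    ← Real.exp_add]
  congr 2
  field_simp
  ring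

lemma renyi_gauss_withDensity (hσ : 0 < σ) :
    gaussianReal 0 ⟨σ ^ 2, sq_nonneg σ⟩
      = volume.withDensity
          (fun x => ((gaussianPDFReal 0 ⟨σ ^ 2, sq_nonneg σ⟩ x).toNNReal : ENNReal)) := by
  rw [gaussianReal_of_var_ne_zero _ (renyi_vne hσ)]
  rfl

lemma renyi_integral_gauss (hσ : 0 < σ) (g : ℝ → ℝ) :
    ∫ x, g x ∂(gaussianReal 0 ⟨σ ^ 2, sq_nonneg σ⟩)
      = ∫ x, gaussianPDFReal 0 ⟨σ ^ 2, sq_nonneg σ⟩ x * g x := by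
  rw [renyi_gauss_withDensity hσ,
    integral_withDensity_eq_integral_smul (f := fun x => (gaussianPDFReal 0 ⟨σ ^ 2, sq_nonneg σ⟩ x).toNNReal)
      ((measurable_gaussianPDFReal _ _).real_toNNReal)]
  congr 1
  ext x
  simp [NNReal.smul_def, Real.coe_toNNReal _ (gaussianPDFReal_nonneg 0 ⟨σ ^ 2, sq_nonneg σ⟩ x)]

lemma renyi_integrable_exp_gauss (hσ : 0 < σ) (t : ℝ) :
    Integrable (fun x => Real.exp (t * x)) (gaussianReal 0 ⟨σ ^ 2, sq_nonneg σ⟩) := by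
  rw [renyi_gauss_withDensity hσ,
    integrable_withDensity_iff_integrable_smul (f := fun x => (gaussianPDFReal 0 ⟨σ ^ 2, sq_nonneg σ⟩ x).toNNReal)
      ((measurable_gaussianPDFReal _ _).real_toNNReal)]
  have heq : (fun x => (((gaussianPDFReal 0 ⟨σ ^ 2, sq_nonneg σ⟩ x).toNNReal : NNReal))
        • Real.exp (t * x))
      = fun x => Real.exp (σ ^ 2 * t ^ 2 / 2) *
          gaussianPDFReal (σ ^ 2 * t) ⟨σ ^ 2, sq_nonneg σ⟩ x := by
    funext x
    rw [NNReal.smul_def, smul_eq_mul, Real.coe_toNNReal _ (gaussianPDFReal_nonneg 0 ⟨σ ^ 2, sq_nonneg σ⟩ x),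
      renyi_pdf_mul_exp hσ]
  rw [heq]
  exact (integrable_gaussianPDFReal _ _).const_mul _

lemma renyi_int_exp_gauss (hσ : 0 < σ) (t : ℝ) :
    ∫ x, Real.exp (t * x) ∂(gaussianReal 0 ⟨σ ^ 2, sq_nonneg σ⟩)
      = Real.exp (σ ^ 2 * t ^ 2 / 2) := by
  rw [renyi_integral_gauss hσ]
  simp_rw [renyi_pdf_mul_exp hσ]
  rw [integral_const_mul, integral_gaussianPDFReal_eq_one _ (renyi_vne hσ), mul_one]

lemma renyi_sum_ite_ne_eq {n : ℕ} (c : Fin n → Fin 2) :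
    (∑ i, ∑ i', if i ≠ i' then ((c i : ℕ) : ℝ) * ((c i' : ℕ) : ℝ) else 0)
      = (∑ i, ((c i : ℕ) : ℝ)) ^ 2 - ∑ i, ((c i : ℕ) : ℝ) := by
  have hb : ∀ b : Fin 2, ((b : ℕ) : ℝ) * ((b : ℕ) : ℝ) = ((b : ℕ) : ℝ) := by
    intro b; fin_cases b <;> norm_num
  have h1 : ∀ i : Fin n, (∑ i', if i ≠ i' then ((c i : ℕ) : ℝ) * ((c i' : ℕ) : ℝ) else 0)
      = (∑ i', ((c i : ℕ) : ℝ) * ((c i' : ℕ) : ℝ)) - ((c i : ℕ) : ℝ) := by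
    intro i
    have h2 : ∀ i' : Fin n, ((c i : ℕ) : ℝ) * ((c i' : ℕ) : ℝ)
        = (if i ≠ i' then ((c i : ℕ) : ℝ) * ((c i' : ℕ) : ℝ) else 0)
          + (if i = i' then ((c i : ℕ) : ℝ) * ((c i' : ℕ) : ℝ) else 0) := by
      intro i'; by_cases h : i = i' <;> simp [h]
    rw [Finset.sum_congr rfl fun i' _ => h2 i', Finset.sum_add_distrib, Finset.sum_ite_eq]
    simp only [Finset.mem_univ, if_true, hb]
    ring
  rw [Finset.sum_congr rfl fun i _ => h1 i, Finset.sum_sub_distrib, sq, Finset.sum_mul_sum]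

end RenyiAux

/-- Closed form for `exp((α−1) R_α(N(Bern(p), σ²), N(0, σ²)))` for integer `α > 1`,
where `N(Bern(p), σ²) = (1−p)·N(0,σ²) + p·N(1,σ²)`:
it equals `E_{c₁,…,c_α i.i.d. Bern(p)}[exp((Σ_{i≠i'} c_i c_{i'})/(2σ²))]`. -/
theorem renyi_bernoulli_mixture_closed_form (α : ℕ) (hα : 1 < α)
    (p : ℝ) (hp0 : 0 ≤ p) (hp1 : p ≤ 1) (σ : ℝ) (hσ : 0 < σ) :
    Real.exp (((α : ℝ) - 1) * ((1 / ((α : ℝ) - 1)) * Real.log (∫ x,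
        (((1 - p) * gaussianPDFReal 0 ⟨σ ^ 2, sq_nonneg σ⟩ x +
            p * gaussianPDFReal 1 ⟨σ ^ 2, sq_nonneg σ⟩ x) /
          gaussianPDFReal 0 ⟨σ ^ 2, sq_nonneg σ⟩ x) ^ (α : ℝ)
        ∂(gaussianReal 0 ⟨σ ^ 2, sq_nonneg σ⟩)))) =
      ∑ c : Fin α → Fin 2, (∏ i, if c i = 1 then p else 1 - p) *
        Real.exp ((∑ i, ∑ i', if i ≠ i' then
            ((c i : ℕ) : ℝ) * ((c i' : ℕ) : ℝ) else 0) / (2 * σ ^ 2)) := by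
  classical
  have hσ2 : (0:ℝ) < σ ^ 2 := by positivity
  -- pointwise expansion of the integrand
  have hpt : ∀ x : ℝ,
      (((1 - p) * gaussianPDFReal 0 ⟨σ ^ 2, sq_nonneg σ⟩ x +
          p * gaussianPDFReal 1 ⟨σ ^ 2, sq_nonneg σ⟩ x) /
        gaussianPDFReal 0 ⟨σ ^ 2, sq_nonneg σ⟩ x) ^ (α : ℝ)
      = ∑ c : Fin α → Fin 2, (∏ i, if c i = 1 then p else 1 - p) *
          Real.exp ((∑ i, ((c i : ℕ) : ℝ)) * ((2 * x - 1) / (2 * σ ^ 2))) := by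
    intro x
    have hg0 : 0 < gaussianPDFReal 0 ⟨σ ^ 2, sq_nonneg σ⟩ x :=
      gaussianPDFReal_pos _ _ _ (renyi_vne hσ)
    have hratio : gaussianPDFReal 1 ⟨σ ^ 2, sq_nonneg σ⟩ x /
        gaussianPDFReal 0 ⟨σ ^ 2, sq_nonneg σ⟩ x
        = Real.exp ((2 * x - 1) / (2 * σ ^ 2)) := by
      simp only [renyi_pdf_eq, sub_zero]
      rw [mul_div_mul_left _ _ (by positivity : (√(2 * π * σ ^ 2))⁻¹ ≠ 0), ← Real.exp_sub]
      congr 1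
      field_simp
      ring
    have hbase : ((1 - p) * gaussianPDFReal 0 ⟨σ ^ 2, sq_nonneg σ⟩ x +
          p * gaussianPDFReal 1 ⟨σ ^ 2, sq_nonneg σ⟩ x) /
        gaussianPDFReal 0 ⟨σ ^ 2, sq_nonneg σ⟩ x
        = (1 - p) + p * Real.exp ((2 * x - 1) / (2 * σ ^ 2)) := by
      rw [add_div, mul_div_assoc, mul_div_assoc, div_self hg0.ne', mul_one, hratio]
    rw [hbase, Real.rpow_natCast]
    have hsum2 : (1 - p) + p * Real.exp ((2 * x - 1) / (2 * σ ^ 2))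
        = ∑ b : Fin 2, (if b = 1 then p else 1 - p) *
            Real.exp (((b : ℕ) : ℝ) * ((2 * x - 1) / (2 * σ ^ 2))) := by
      rw [Fin.sum_univ_two]
      norm_num
    rw [hsum2,
      show (∑ b : Fin 2, (if b = 1 then p else 1 - p) *
          Real.exp (((b : ℕ) : ℝ) * ((2 * x - 1) / (2 * σ ^ 2)))) ^ α
        = ∏ _i : Fin α, ∑ b : Fin 2, (if b = 1 then p else 1 - p) *
            Real.exp (((b : ℕ) : ℝ) * ((2 * x - 1) / (2 * σ ^ 2))) from by
        rw [Finset.prod_const, Finset.card_univ, Fintype.card_fin],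
      Finset.prod_univ_sum, Fintype.piFinset_univ]
    refine Finset.sum_congr rfl fun c _ => ?_
    rw [Finset.prod_mul_distrib, ← Real.exp_sum, ← Finset.sum_mul]
  -- splitting of the exponent
  have hsplit : ∀ k x : ℝ, Real.exp (k * ((2 * x - 1) / (2 * σ ^ 2)))
      = Real.exp (-(k / (2 * σ ^ 2))) * Real.exp ((k / σ ^ 2) * x) := by
    intro k x
    rw [← Real.exp_add]
    congr 1
    field_simp
    ring
  -- integrability of each summand
  have hint : ∀ c : Fin α → Fin 2, Integrable
      (fun x => (∏ i, if c i = 1 then p else 1 - p) *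
        Real.exp ((∑ i, ((c i : ℕ) : ℝ)) * ((2 * x - 1) / (2 * σ ^ 2))))
      (gaussianReal 0 ⟨σ ^ 2, sq_nonneg σ⟩) := by
    intro c
    have heq : (fun x => (∏ i, if c i = 1 then p else 1 - p) *
          Real.exp ((∑ i, ((c i : ℕ) : ℝ)) * ((2 * x - 1) / (2 * σ ^ 2))))
        = fun x => ((∏ i, if c i = 1 then p else 1 - p) *
            Real.exp (-((∑ i, ((c i : ℕ) : ℝ)) / (2 * σ ^ 2)))) *
            Real.exp (((∑ i, ((c i : ℕ) : ℝ)) / σ ^ 2) * x) := by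
      funext x
      rw [hsplit]
      ring
    rw [heq]
    exact (renyi_integrable_exp_gauss hσ _).const_mul _
  -- value of each summand's integral
  have hterm : ∀ c : Fin α → Fin 2,
      (∫ x, (∏ i, if c i = 1 then p else 1 - p) *
        Real.exp ((∑ i, ((c i : ℕ) : ℝ)) * ((2 * x - 1) / (2 * σ ^ 2)))
        ∂(gaussianReal 0 ⟨σ ^ 2, sq_nonneg σ⟩))
      = (∏ i, if c i = 1 then p else 1 - p) *
        Real.exp ((∑ i, ∑ i', if i ≠ i' then
            ((c i : ℕ) : ℝ) * ((c i' : ℕ) : ℝ) else 0) / (2 * σ ^ 2)) := by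
    intro c
    simp_rw [hsplit (∑ i, ((c i : ℕ) : ℝ))]
    rw [integral_const_mul, integral_const_mul, renyi_int_exp_gauss hσ, ← Real.exp_add,
      renyi_sum_ite_ne_eq c]
    congr 2
    field_simp
    ring
  -- the integral equals the right-hand side
  have hI : (∫ x,
        (((1 - p) * gaussianPDFReal 0 ⟨σ ^ 2, sq_nonneg σ⟩ x +
            p * gaussianPDFReal 1 ⟨σ ^ 2, sq_nonneg σ⟩ x) /
          gaussianPDFReal 0 ⟨σ ^ 2, sq_nonneg σ⟩ x) ^ (α : ℝ)
        ∂(gaussianReal 0 ⟨σ ^ 2, sq_nonneg σ⟩))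
      = ∑ c : Fin α → Fin 2, (∏ i, if c i = 1 then p else 1 - p) *
        Real.exp ((∑ i, ∑ i', if i ≠ i' then
            ((c i : ℕ) : ℝ) * ((c i' : ℕ) : ℝ) else 0) / (2 * σ ^ 2)) := by
    simp_rw [hpt]
    rw [integral_finset_sum _ fun c _ => hint c]
    exact Finset.sum_congr rfl fun c _ => hterm c
  -- positivity of the right-hand side
  have hW0 : ∀ c : Fin α → Fin 2, 0 ≤ ∏ i, if c i = 1 then p else 1 - p := by
    intro c
    refine Finset.prod_nonneg fun i _ => ?_
    split_ifs
    · exact hp0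
    · linarith
  have hWsum : (∑ c : Fin α → Fin 2, ∏ i, if c i = 1 then p else 1 - p) = 1 := by
    have h := Finset.prod_univ_sum (fun _ : Fin α => (Finset.univ : Finset (Fin 2)))
      (fun _ b => if b = 1 then p else 1 - p)
    rw [Fintype.piFinset_univ] at h
    rw [← h]
    have : (∑ b : Fin 2, if b = 1 then p else 1 - p) = 1 := by
      rw [Fin.sum_univ_two]
      norm_num
    simp [this]
  have hpos : 0 < ∑ c : Fin α → Fin 2, (∏ i, if c i = 1 then p else 1 - p) *
      Real.exp ((∑ i, ∑ i', if i ≠ i' then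
          ((c i : ℕ) : ℝ) * ((c i' : ℕ) : ℝ) else 0) / (2 * σ ^ 2)) := by
    have h1 : (1:ℝ) ≤ ∑ c : Fin α → Fin 2, (∏ i, if c i = 1 then p else 1 - p) *
        Real.exp ((∑ i, ∑ i', if i ≠ i' then
            ((c i : ℕ) : ℝ) * ((c i' : ℕ) : ℝ) else 0) / (2 * σ ^ 2)) := by
      calc (1:ℝ) = ∑ c : Fin α → Fin 2, ∏ i, if c i = 1 then p else 1 - p := hWsum.symm
        _ ≤ _ := ?_
      refine Finset.sum_le_sum fun c _ => ?_
      refine le_mul_of_one_le_right (hW0 c) (Real.one_le_exp ?_)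
      refine div_nonneg ?_ (by positivity)
      refine Finset.sum_nonneg fun i _ => Finset.sum_nonneg fun i' _ => ?_
      split_ifs
      · positivity
      · exact le_refl _
    linarith
  have hα1 : ((α : ℝ) - 1) ≠ 0 := by
    have : (1:ℝ) < (α : ℝ) := by exact_mod_cast hα
    linarith
  rw [hI, show ((α : ℝ) - 1) * ((1 / ((α : ℝ) - 1)) *
      Real.log (∑ c : Fin α → Fin 2, (∏ i, if c i = 1 then p else 1 - p) *
        Real.exp ((∑ i, ∑ i', if i ≠ i' then
            ((c i : ℕ) : ℝ) * ((c i' : ℕ) : ℝ) else 0) / (2 * σ ^ 2))))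
      = Real.log (∑ c : Fin α → Fin 2, (∏ i, if c i = 1 then p else 1 - p) *
        Real.exp ((∑ i, ∑ i', if i ≠ i' then
            ((c i : ℕ) : ℝ) * ((c i' : ℕ) : ℝ) else 0) / (2 * σ ^ 2))) from by
      field_simp,
    Real.exp_log hpos]
end

section
/- Closed-form Rényi divergence of a binomial mixture of Gaussians: for integers α > 1 and K ≥ 1, p ∈ [0,1], σ > 0, letting P_K = Σ_{c=0}^{K} Pr[Bin(K,p)=c] · N(c, σ²) and Q = N(0, σ²), one has exp((α−1) R_α(P_K, Q)) = E_{c_1,…,c_α i.i.d. Bin(K,p)}[ exp( ((Σ_i c_i)² − Σ_i c_i²) / (2σ²) ) ]. -/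
open MeasureTheory ProbabilityTheory Real
open scoped ENNReal NNReal

lemma my_integrable_exp_quadratic {b : ℝ} (hb : 0 < b) (c d : ℝ) :
    Integrable fun x : ℝ => Real.exp (-b*x^2 + c*x + d) := by
  have h : ∀ x : ℝ, -b*x^2+c*x+d = -b*(x - c/(2*b))^2 + (d + c^2/(4*b)) := by
    intro x; field_simp; ring
  simp_rw [h, Real.exp_add]
  exact ((integrable_exp_neg_mul_sq hb).comp_sub_right (c/(2*b))).mul_const _

lemma my_integral_exp_quadratic {b : ℝ} (hb : 0 < b) (c d : ℝ) :
    ∫ x : ℝ, Real.exp (-b*x^2 + c*x + d) = Real.sqrt (π/b) * Real.exp (d + c^2/(4*b)) := by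
  have h : ∀ x : ℝ, -b*x^2+c*x+d = -b*(x - c/(2*b))^2 + (d + c^2/(4*b)) := by
    intro x; field_simp; ring
  simp_rw [h, Real.exp_add]
  rw [MeasureTheory.integral_mul_const,
    integral_sub_right_eq_self (fun x => Real.exp (-b*x^2)) (c/(2*b)), integral_gaussian]

lemma my_form {σ : ℝ} (hσ : 0 < σ) (S C : ℝ) (x : ℝ) :
    gaussianPDFReal 0 ⟨σ^2, sq_nonneg σ⟩ x * Real.exp ((2*S*x - C)/(2*σ^2)) =
      (Real.sqrt (2*π*σ^2))⁻¹ *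
        Real.exp (-(2*σ^2)⁻¹*x^2 + (S/σ^2)*x + (-C/(2*σ^2))) := by
  unfold gaussianPDFReal
  have hvc : ((⟨σ^2, sq_nonneg σ⟩ : NNReal) : ℝ) = σ^2 := rfl
  change (√(2*π*σ^2))⁻¹ * Real.exp (-(x - 0)^2 / (2*σ^2)) * Real.exp ((2*S*x - C)/(2*σ^2)) = _
  rw [mul_assoc, ← Real.exp_add]
  congr 2
  field_simp
  ring

lemma my_gauss_integrable {σ : ℝ} (hσ : 0 < σ) (S C : ℝ) :
    Integrable (fun x => gaussianPDFReal 0 ⟨σ^2, sq_nonneg σ⟩ x *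
      Real.exp ((2*S*x - C)/(2*σ^2))) := by
  simp_rw [my_form hσ S C]
  exact (my_integrable_exp_quadratic (by positivity) _ _).const_mul _

lemma my_gauss_int {σ : ℝ} (hσ : 0 < σ) (S C : ℝ) :
    ∫ x, gaussianPDFReal 0 ⟨σ^2, sq_nonneg σ⟩ x * Real.exp ((2*S*x - C)/(2*σ^2)) =
      Real.exp ((S^2 - C)/(2*σ^2)) := by
  simp_rw [my_form hσ S C]
  rw [integral_const_mul, my_integral_exp_quadratic (by positivity)]
  have h1 : π / (2*σ^2)⁻¹ = 2*π*σ^2 := by field_simp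
  have h2 : Real.sqrt (2*π*σ^2) ≠ 0 := by positivity
  rw [h1, ← mul_assoc, inv_mul_cancel₀ h2, one_mul]
  congr 1
  field_simp
  ring

lemma my_mix_integral (α K : ℕ) (w : ℕ → ℝ) (σ : ℝ) (hσ : 0 < σ) :
    (∫ x, ((∑ c ∈ Finset.range (K+1), w c * gaussianPDFReal c ⟨σ^2, sq_nonneg σ⟩ x) /
        gaussianPDFReal 0 ⟨σ^2, sq_nonneg σ⟩ x) ^ (α : ℝ)
      ∂(gaussianReal 0 ⟨σ^2, sq_nonneg σ⟩))
    = ∑ q : Fin α → Fin (K+1), (∏ i, w (q i)) *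
        Real.exp (((∑ i, ((q i : ℕ) : ℝ))^2 - ∑ i, ((q i : ℕ) : ℝ)^2) / (2*σ^2)) := by
  have hσ2 : (0:ℝ) < σ^2 := by positivity
  have hv0 : (⟨σ^2, sq_nonneg σ⟩ : NNReal) ≠ 0 := by
    intro h
    have h2 := congrArg NNReal.toReal h
    change σ^2 = (0:ℝ) at h2
    exact absurd h2 (by positivity)
  -- pointwise identity
  have hpt : ∀ x : ℝ,
      ((∑ c ∈ Finset.range (K+1), w c * gaussianPDFReal c ⟨σ^2, sq_nonneg σ⟩ x) /
        gaussianPDFReal 0 ⟨σ^2, sq_nonneg σ⟩ x) ^ (α : ℝ)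
      = ∑ q : Fin α → Fin (K+1), (∏ i, w (q i)) *
          Real.exp ((2 * (∑ i, ((q i : ℕ) : ℝ)) * x - ∑ i, ((q i : ℕ) : ℝ)^2) / (2*σ^2)) := by
    intro x
    have hratio : ∀ c : ℕ, gaussianPDFReal c ⟨σ^2, sq_nonneg σ⟩ x /
        gaussianPDFReal 0 ⟨σ^2, sq_nonneg σ⟩ x
        = Real.exp ((2*(c:ℝ)*x - (c:ℝ)^2)/(2*σ^2)) := by
      intro c
      unfold gaussianPDFReal
      change (√(2*π*σ^2))⁻¹ * Real.exp (-(x - (c:ℝ))^2 / (2*σ^2)) /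
        ((√(2*π*σ^2))⁻¹ * Real.exp (-(x - 0)^2 / (2*σ^2))) = _
      rw [mul_div_mul_left _ _ (inv_ne_zero (by positivity)), ← Real.exp_sub]
      congr 1
      field_simp
      ring
    rw [Real.rpow_natCast, Finset.sum_div]
    simp_rw [mul_div_assoc, hratio]
    rw [← Fin.sum_univ_eq_sum_range
      (fun c => w c * Real.exp ((2*(c:ℝ)*x - (c:ℝ)^2)/(2*σ^2))) (K+1)]
    rw [Fintype.sum_pow]
    refine Finset.sum_congr rfl fun q _ => ?_
    rw [Finset.prod_mul_distrib, ← Real.exp_sum]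
    congr 1
    rw [← Finset.sum_div]
    congr 1
    rw [Finset.sum_sub_distrib]
    congr 1
    rw [Finset.mul_sum, Finset.sum_mul]
  simp_rw [hpt]
  rw [gaussianReal_of_var_ne_zero 0 hv0]
  have hd : (gaussianPDF 0 (⟨σ^2, sq_nonneg σ⟩ : NNReal)) =
      fun x => ((Real.toNNReal (gaussianPDFReal 0 ⟨σ^2, sq_nonneg σ⟩ x) : NNReal) : ℝ≥0∞) := rfl
  rw [hd, integral_withDensity_eq_integral_smul
    ((measurable_gaussianPDFReal 0 ⟨σ^2, sq_nonneg σ⟩).real_toNNReal)]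
  have hre : ∀ x : ℝ,
      (Real.toNNReal (gaussianPDFReal 0 ⟨σ^2, sq_nonneg σ⟩ x)) •
        (∑ q : Fin α → Fin (K+1), (∏ i, w (q i)) *
          Real.exp ((2 * (∑ i, ((q i : ℕ) : ℝ)) * x - ∑ i, ((q i : ℕ) : ℝ)^2) / (2*σ^2)))
      = ∑ q : Fin α → Fin (K+1), (∏ i, w (q i)) *
          (gaussianPDFReal 0 ⟨σ^2, sq_nonneg σ⟩ x *
            Real.exp ((2 * (∑ i, ((q i : ℕ) : ℝ)) * x - ∑ i, ((q i : ℕ) : ℝ)^2) / (2*σ^2))) := by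
    intro x
    have hcn := Real.coe_toNNReal _ (gaussianPDFReal_nonneg 0 ⟨σ^2, sq_nonneg σ⟩ x)
    rw [NNReal.smul_def, hcn, smul_eq_mul,
      Finset.mul_sum]
    exact Finset.sum_congr rfl fun q _ => by ring
  simp_rw [hre]
  rw [integral_finset_sum]
  · exact Finset.sum_congr rfl fun q _ => by
      rw [integral_const_mul, my_gauss_int hσ]
  · exact fun q _ => (my_gauss_integrable hσ _ _).const_mul _

lemma my_rhs_pos (α K : ℕ) (p σ : ℝ) (hp0 : 0 ≤ p) (hp1 : p ≤ 1) :
    0 < ∑ q : Fin α → Fin (K + 1),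
      (∏ i, (K.choose (q i) : ℝ) * p ^ (q i : ℕ) * (1 - p) ^ (K - (q i : ℕ))) *
        Real.exp (((∑ i, ((q i : ℕ) : ℝ)) ^ 2 - ∑ i, ((q i : ℕ) : ℝ) ^ 2) / (2 * σ ^ 2)) := by
  have h1p : 0 ≤ 1 - p := sub_nonneg.mpr hp1
  have hw : ∀ c : ℕ, 0 ≤ (K.choose c : ℝ) * p ^ c * (1 - p) ^ (K - c) := fun c =>
    mul_nonneg (mul_nonneg (Nat.cast_nonneg _) (pow_nonneg hp0 _)) (pow_nonneg h1p _)
  obtain ⟨c0, hc0⟩ : ∃ c0 : Fin (K + 1),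
      0 < (K.choose (c0 : ℕ) : ℝ) * p ^ (c0 : ℕ) * (1 - p) ^ (K - (c0 : ℕ)) := by
    rcases lt_or_eq_of_le hp1 with h | h
    · refine ⟨⟨0, Nat.succ_pos K⟩, ?_⟩
      simp only [Fin.val_mk, Nat.choose_zero_right, Nat.cast_one, pow_zero, Nat.sub_zero]
      have : 0 < 1 - p := by linarith
      positivity
    · refine ⟨⟨K, Nat.lt_succ_self K⟩, ?_⟩
      simp only [Fin.val_mk, Nat.choose_self, Nat.cast_one, Nat.sub_self, pow_zero]
      rw [h]
      norm_num
  refine Finset.sum_pos' (fun q _ => mul_nonneg (Finset.prod_nonneg fun i _ => hw _)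
    (Real.exp_pos _).le) ⟨fun _ => c0, Finset.mem_univ _, ?_⟩
  exact mul_pos (Finset.prod_pos fun i _ => hc0) (Real.exp_pos _)


/-- Closed form for `exp((α−1) R_α(N(Bin(K,p), σ²), N(0, σ²)))` for integers `α > 1`, `K ≥ 1`,
where `N(Bin(K,p), σ²) = Σ_{c=0}^K Pr[Bin(K,p)=c]·N(c,σ²)`:
it equals `E_{c₁,…,c_α i.i.d. Bin(K,p)}[exp(((Σ_i c_i)² − Σ_i c_i²)/(2σ²))]`. -/
theorem renyi_binomial_mixture_closed_form (α K : ℕ) (hα : 1 < α) (hK : 1 ≤ K)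
    (p : ℝ) (hp0 : 0 ≤ p) (hp1 : p ≤ 1) (σ : ℝ) (hσ : 0 < σ) :
    Real.exp (((α : ℝ) - 1) * ((1 / ((α : ℝ) - 1)) * Real.log (∫ x,
        ((∑ c ∈ Finset.range (K + 1),
            (K.choose c : ℝ) * p ^ c * (1 - p) ^ (K - c) *
              gaussianPDFReal c ⟨σ ^ 2, sq_nonneg σ⟩ x) /
          gaussianPDFReal 0 ⟨σ ^ 2, sq_nonneg σ⟩ x) ^ (α : ℝ)
        ∂(gaussianReal 0 ⟨σ ^ 2, sq_nonneg σ⟩)))) =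
      ∑ c : Fin α → Fin (K + 1),
        (∏ i, (K.choose (c i) : ℝ) * p ^ (c i : ℕ) * (1 - p) ^ (K - (c i : ℕ))) *
          Real.exp (((∑ i, ((c i : ℕ) : ℝ)) ^ 2 - ∑ i, ((c i : ℕ) : ℝ) ^ 2) /
            (2 * σ ^ 2)) := by
  have hne : ((α : ℝ) - 1) ≠ 0 := sub_ne_zero.mpr (by
    have : (1 : ℝ) < (α : ℝ) := by exact_mod_cast hα
    linarith)
  rw [← mul_assoc, mul_one_div_cancel hne, one_mul]
  rw [my_mix_integral α K (fun c => (K.choose c : ℝ) * p ^ c * (1 - p) ^ (K - c)) σ hσ]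
  exact Real.exp_log (my_rhs_pos α K p σ hp0 hp1)
end

section
/- Noise comparison for binomial versus Bernoulli Gaussian mixtures (Lemma conj-ub): for integers α > 1 and K ≥ 1, p ∈ [0,1], σ > 0, the α-Rényi divergence satisfies R_α( N(Bin(K,p), K²σ²), N(0, K²σ²) ) ≤ R_α( N(Bern(p), σ²), N(0, σ²) ). -/
open MeasureTheory ProbabilityTheory
open scoped NNReal ENNReal
open Real

noncomputable def mixg (W V : ℕ → ℝ) (m : ℕ) (v : ℝ≥0) (x : ℝ) : ℝ :=
  ∑ c ∈ Finset.range m, W c * Real.exp ((V c * x - V c ^ 2 / 2) / v)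

noncomputable def Jg (W V : ℕ → ℝ) (m : ℕ) (v : ℝ≥0) (n : ℕ) (μ : ℝ) : ℝ :=
  ∫ x, (mixg W V m v x) ^ n * gaussianPDFReal μ v x

lemma vpos {v : ℝ≥0} (hv : v ≠ 0) : (0:ℝ) < (v:ℝ) :=
  NNReal.coe_pos.mpr (pos_iff_ne_zero.mpr hv)

lemma tilt_pdf {v : ℝ≥0} (hv : v ≠ 0) (c μ x : ℝ) :
    Real.exp ((c * x - c ^ 2 / 2) / v) * gaussianPDFReal μ v x
      = Real.exp (c * μ / v) * gaussianPDFReal (μ + c) v x := by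
  have hv0 : (0:ℝ) < v := vpos hv
  simp only [gaussianPDFReal]
  rw [mul_left_comm, ← Real.exp_add, mul_left_comm, ← Real.exp_add]
  congr 1
  field_simp
  ring

lemma exp_mul_pdf {v : ℝ≥0} (hv : v ≠ 0) (t μ : ℝ) (x : ℝ) :
    Real.exp (t * x) * gaussianPDFReal μ v x
      = Real.exp ((t * v) * μ / v + (t * v) ^ 2 / (2 * v)) * gaussianPDFReal (μ + t * v) v x := by
  have hv0 : (0:ℝ) < v := vpos hv
  have h1 : Real.exp (t * x)
      = Real.exp ((t * v) ^ 2 / (2 * v)) * Real.exp (((t * v) * x - (t * v) ^ 2 / 2) / v) := by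
    rw [← Real.exp_add]; congr 1; field_simp; ring
  rw [h1, mul_assoc, tilt_pdf hv, ← mul_assoc, ← Real.exp_add]
  congr 1; ring

lemma integrable_exp_mul_pdf {v : ℝ≥0} (hv : v ≠ 0) (t μ : ℝ) :
    Integrable (fun x => Real.exp (t * x) * gaussianPDFReal μ v x) := by
  have : (fun x => Real.exp (t * x) * gaussianPDFReal μ v x)
      = fun x => Real.exp ((t * v) * μ / v + (t * v) ^ 2 / (2 * v))
          * gaussianPDFReal (μ + t * v) v x := funext (exp_mul_pdf hv t μ)
  rw [this]
  exact (integrable_gaussianPDFReal _ _).const_mul _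

lemma aux_exp_le {T a : ℝ} (h : |a| ≤ T) (x : ℝ) :
    Real.exp (a * x) ≤ Real.exp (T * x) + Real.exp (-T * x) := by
  rcases le_total 0 x with hx | hx
  · have h1 : a * x ≤ T * x := mul_le_mul_of_nonneg_right ((le_abs_self a).trans h) hx
    exact (Real.exp_le_exp.mpr h1).trans (le_add_of_nonneg_right (Real.exp_pos _).le)
  · have h1 : a * x ≤ -T * x := mul_le_mul_of_nonpos_right (neg_le_of_abs_le h) hx
    exact (Real.exp_le_exp.mpr h1).trans (le_add_of_nonneg_left (Real.exp_pos _).le)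

lemma measurable_mixg (W V : ℕ → ℝ) (m : ℕ) (v : ℝ≥0) : Measurable (mixg W V m v) := by
  unfold mixg
  exact Finset.measurable_sum _ fun c _ => by fun_prop

lemma mixg_abs_le {W V : ℕ → ℝ} {m : ℕ} {v : ℝ≥0} (hv : v ≠ 0) (x : ℝ) :
    |mixg W V m v x| ≤ (∑ c ∈ Finset.range m, |W c|) *
      (Real.exp (((∑ c ∈ Finset.range m, |V c|) / v) * x)
        + Real.exp (-((∑ c ∈ Finset.range m, |V c|) / v) * x)) := by
  have hv0 : (0:ℝ) < v := vpos hv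
  set T : ℝ := (∑ c ∈ Finset.range m, |V c|) / v with hT
  calc |mixg W V m v x| ≤ ∑ c ∈ Finset.range m, |W c * Real.exp ((V c * x - V c ^ 2 / 2) / v)| :=
        Finset.abs_sum_le_sum_abs _ _
    _ ≤ ∑ c ∈ Finset.range m, |W c| * (Real.exp (T * x) + Real.exp (-T * x)) := by
        refine Finset.sum_le_sum fun c hc => ?_
        rw [abs_mul, Real.abs_exp]
        refine mul_le_mul_of_nonneg_left ?_ (abs_nonneg _)
        have heq : (V c * x - V c ^ 2 / 2) / v = (V c / v) * x - V c ^ 2 / (2 * v) := by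
          field_simp
        have h2 : V c ^ 2 / (2 * (v:ℝ)) ≥ 0 := by positivity
        have h1 : (V c * x - V c ^ 2 / 2) / v ≤ (V c / v) * x := by rw [heq]; linarith
        have habs : |V c / v| ≤ T := by
          rw [abs_div, abs_of_pos hv0, hT]
          exact (div_le_div_iff_of_pos_right hv0).mpr (Finset.single_le_sum (fun i _ => abs_nonneg (V i)) hc)
        exact (Real.exp_le_exp.mpr h1).trans (aux_exp_le habs x)
    _ = _ := by rw [← Finset.sum_mul]

lemma aux_add_pow_le {A B : ℝ} (hA : 0 ≤ A) (hB : 0 ≤ B) (n : ℕ) :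
    (A + B) ^ n ≤ 2 ^ n * (A ^ n + B ^ n) := by
  rcases le_total A B with h | h
  · calc (A + B) ^ n ≤ (2 * B) ^ n := by
          apply pow_le_pow_left₀ (by linarith) (by linarith)
      _ = 2 ^ n * B ^ n := by rw [mul_pow]
      _ ≤ 2 ^ n * (A ^ n + B ^ n) := by
          apply mul_le_mul_of_nonneg_left _ (by positivity)
          nlinarith [pow_nonneg hA n]
  · calc (A + B) ^ n ≤ (2 * A) ^ n := by
          apply pow_le_pow_left₀ (by linarith) (by linarith)
      _ = 2 ^ n * A ^ n := by rw [mul_pow]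
      _ ≤ 2 ^ n * (A ^ n + B ^ n) := by
          apply mul_le_mul_of_nonneg_left _ (by positivity)
          nlinarith [pow_nonneg hB n]

lemma integrable_exp_mul_mixg_pow {W V : ℕ → ℝ} {m : ℕ} {v : ℝ≥0} (hv : v ≠ 0)
    (t μ : ℝ) (n : ℕ) :
    Integrable (fun x => Real.exp (t * x) * (mixg W V m v x) ^ n * gaussianPDFReal μ v x) := by
  have hv0 : (0:ℝ) < v := vpos hv
  set S : ℝ := ∑ c ∈ Finset.range m, |W c| with hS
  set T : ℝ := (∑ c ∈ Finset.range m, |V c|) / v with hT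
  have hS0 : 0 ≤ S := Finset.sum_nonneg fun c _ => abs_nonneg _
  refine Integrable.mono'
    (g := fun x => (2 * S) ^ n * (Real.exp ((t + n * T) * x) * gaussianPDFReal μ v x
      + Real.exp ((t - n * T) * x) * gaussianPDFReal μ v x)) ?_ ?_ (ae_of_all _ ?_)
  · exact ((integrable_exp_mul_pdf hv _ μ).add (integrable_exp_mul_pdf hv _ μ)).const_mul _
  · apply Measurable.aestronglyMeasurable
    exact ((Real.measurable_exp.comp (measurable_id.const_mul t)).mul
      ((measurable_mixg W V m v).pow_const n)).mul (measurable_gaussianPDFReal μ v)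
  · intro x
    rw [Real.norm_eq_abs, abs_mul, abs_mul, abs_pow, Real.abs_exp,
      abs_of_nonneg (gaussianPDFReal_nonneg μ v x)]
    have hmb : |mixg W V m v x| ^ n
        ≤ (2 * S) ^ n * (Real.exp ((n * T) * x) + Real.exp (-(n * T) * x)) := by
      calc |mixg W V m v x| ^ n
          ≤ (S * (Real.exp (T * x) + Real.exp (-T * x))) ^ n :=
            pow_le_pow_left₀ (abs_nonneg _) (mixg_abs_le hv x) n
        _ = S ^ n * (Real.exp (T * x) + Real.exp (-T * x)) ^ n := mul_pow _ _ _
        _ ≤ S ^ n * (2 ^ n * ((Real.exp (T * x)) ^ n + (Real.exp (-T * x)) ^ n)) :=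
            mul_le_mul_of_nonneg_left
              (aux_add_pow_le (Real.exp_pos _).le (Real.exp_pos _).le n) (pow_nonneg hS0 n)
        _ = (2 * S) ^ n * (Real.exp ((n * T) * x) + Real.exp (-(n * T) * x)) := by
            rw [← Real.exp_nat_mul, ← Real.exp_nat_mul]
            have e1 : (n : ℝ) * (T * x) = (n * T) * x := by ring
            have e2 : (n : ℝ) * (-T * x) = -(n * T) * x := by ring
            rw [e1, e2]; ring
    calc Real.exp (t * x) * |mixg W V m v x| ^ n * gaussianPDFReal μ v x
        ≤ Real.exp (t * x) * ((2 * S) ^ n * (Real.exp ((n * T) * x) + Real.exp (-(n * T) * x)))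
            * gaussianPDFReal μ v x := by
          apply mul_le_mul_of_nonneg_right (mul_le_mul_of_nonneg_left hmb (Real.exp_pos _).le)
            (gaussianPDFReal_nonneg μ v x)
      _ = (2 * S) ^ n * (Real.exp ((t + n * T) * x) * gaussianPDFReal μ v x
            + Real.exp ((t - n * T) * x) * gaussianPDFReal μ v x) := by
          rw [show Real.exp ((t + n * T) * x) = Real.exp (t * x) * Real.exp ((n * T) * x) by
              rw [← Real.exp_add]; ring_nf,
            show Real.exp ((t - n * T) * x) = Real.exp (t * x) * Real.exp (-(n * T) * x) by
              rw [← Real.exp_add]; ring_nf]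
          ring

lemma integrable_mixg_pow {W V : ℕ → ℝ} {m : ℕ} {v : ℝ≥0} (hv : v ≠ 0) (μ : ℝ) (n : ℕ) :
    Integrable (fun x => (mixg W V m v x) ^ n * gaussianPDFReal μ v x) := by
  have := integrable_exp_mul_mixg_pow (W := W) (V := V) (m := m) hv 0 μ n
  simpa using this

lemma Jg_zero {W V : ℕ → ℝ} {m : ℕ} {v : ℝ≥0} (hv : v ≠ 0) (μ : ℝ) :
    Jg W V m v 0 μ = 1 := by
  simp only [Jg, pow_zero, one_mul]
  exact integral_gaussianPDFReal_eq_one μ hv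

lemma Jg_succ {W V : ℕ → ℝ} {m : ℕ} {v : ℝ≥0} (hv : v ≠ 0) (n : ℕ) (μ : ℝ) :
    Jg W V m v (n + 1) μ
      = ∑ c ∈ Finset.range m, W c * Real.exp (V c * μ / v) * Jg W V m v n (μ + V c) := by
  have key : ∀ x : ℝ, (mixg W V m v x) ^ (n + 1) * gaussianPDFReal μ v x
      = ∑ c ∈ Finset.range m, W c * Real.exp (V c * μ / v)
          * ((mixg W V m v x) ^ n * gaussianPDFReal (μ + V c) v x) := by
    intro x
    have hmix : mixg W V m v x * gaussianPDFReal μ v x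
        = ∑ c ∈ Finset.range m, W c * Real.exp (V c * μ / v) * gaussianPDFReal (μ + V c) v x := by
      rw [mixg, Finset.sum_mul]
      refine Finset.sum_congr rfl fun c _ => ?_
      rw [mul_assoc, tilt_pdf hv, ← mul_assoc]
    calc (mixg W V m v x) ^ (n + 1) * gaussianPDFReal μ v x
        = (mixg W V m v x) ^ n * (mixg W V m v x * gaussianPDFReal μ v x) := by
          rw [pow_succ]; ring
      _ = ∑ c ∈ Finset.range m, W c * Real.exp (V c * μ / v)
            * ((mixg W V m v x) ^ n * gaussianPDFReal (μ + V c) v x) := by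
          rw [hmix, Finset.mul_sum]
          exact Finset.sum_congr rfl fun c _ => by ring
  have h1 : Jg W V m v (n + 1) μ = ∫ x, ∑ c ∈ Finset.range m,
      W c * Real.exp (V c * μ / v) * ((mixg W V m v x) ^ n * gaussianPDFReal (μ + V c) v x) := by
    exact integral_congr_ae (Filter.Eventually.of_forall key)
  rw [h1, integral_finset_sum _ fun c _ => (integrable_mixg_pow hv (μ + V c) n).const_mul _]
  exact Finset.sum_congr rfl fun c _ => by rw [MeasureTheory.integral_const_mul]; rfl

lemma Jg_chord {W V : ℕ → ℝ} {m : ℕ} {v : ℝ≥0} (hv : v ≠ 0) (hW : ∀ c, 0 ≤ W c)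
    {R : ℝ} (hR : 0 < R) :
    ∀ (n : ℕ) (μ t : ℝ), 0 ≤ t → t ≤ R →
      Real.exp (t * μ / v) * Jg W V m v n (μ + t)
        ≤ (1 - t / R) * Jg W V m v n μ
          + t / R * (Real.exp (R * μ / v) * Jg W V m v n (μ + R)) := by
  intro n
  induction n with
  | zero =>
    intro μ t ht0 htR
    rw [Jg_zero hv, Jg_zero hv, Jg_zero hv]
    have ha : (0:ℝ) ≤ 1 - t / R := by
      have := (div_le_one hR).mpr htR; linarith
    have hb : (0:ℝ) ≤ t / R := by positivity
    have hab : (1 - t / R) + t / R = 1 := by ring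
    have h := convexOn_exp.2 (Set.mem_univ (0:ℝ)) (Set.mem_univ (R * μ / v)) ha hb hab
    simp only [smul_eq_mul, mul_zero, zero_add, Real.exp_zero, mul_one] at h
    have harg : t / R * (R * μ / v) = t * μ / v := by
      field_simp
    rw [harg] at h
    simpa using h
  | succ n ih =>
    intro μ t ht0 htR
    rw [Jg_succ hv, Jg_succ hv, Jg_succ hv, Finset.mul_sum, Finset.mul_sum, Finset.mul_sum,
      Finset.mul_sum, ← Finset.sum_add_distrib]
    refine Finset.sum_le_sum fun c _ => ?_
    have h := ih (μ + V c) t ht0 htR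
    have hc0 : 0 ≤ W c * Real.exp (V c * μ / v) := mul_nonneg (hW c) (Real.exp_pos _).le
    have h2 := mul_le_mul_of_nonneg_left h hc0
    have e1 : Real.exp (t * μ / v) * Real.exp (V c * (μ + t) / v)
        = Real.exp (V c * μ / v) * Real.exp (t * (μ + V c) / v) := by
      rw [← Real.exp_add, ← Real.exp_add]; congr 1
      have hv0 : (0:ℝ) < v := vpos hv
      field_simp; ring
    have e2 : Real.exp (V c * μ / v) * Real.exp (R * (μ + V c) / v)
        = Real.exp (R * μ / v) * Real.exp (V c * (μ + R) / v) := by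
      rw [← Real.exp_add, ← Real.exp_add]; congr 1
      have hv0 : (0:ℝ) < v := vpos hv
      field_simp; ring
    have a1 : μ + t + V c = μ + V c + t := by ring
    have a2 : μ + R + V c = μ + V c + R := by ring
    rw [a1, a2]
    calc Real.exp (t * μ / v) * (W c * Real.exp (V c * (μ + t) / v) * Jg W V m v n (μ + V c + t))
        = W c * Real.exp (V c * μ / v)
            * (Real.exp (t * (μ + V c) / v) * Jg W V m v n (μ + V c + t)) := by
          linear_combination (W c * Jg W V m v n (μ + V c + t)) * e1
      _ ≤ W c * Real.exp (V c * μ / v)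
            * ((1 - t / R) * Jg W V m v n (μ + V c)
              + t / R * (Real.exp (R * (μ + V c) / v) * Jg W V m v n (μ + V c + R))) := h2
      _ = (1 - t / R) * (W c * Real.exp (V c * μ / v) * Jg W V m v n (μ + V c))
            + t / R * (Real.exp (R * μ / v)
              * (W c * Real.exp (V c * (μ + R) / v) * Jg W V m v n (μ + V c + R))) := by
          linear_combination (t / R * W c * Jg W V m v n (μ + V c + R)) * e2

lemma Jg_le_two {W V : ℕ → ℝ} {m : ℕ} {v : ℝ≥0} (hv : v ≠ 0) (hW : ∀ c, 0 ≤ W c)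
    {R q : ℝ} (hR : 0 < R) (hq0 : 0 ≤ q) (hq1 : q ≤ 1)
    (hV0 : ∀ c ∈ Finset.range m, 0 ≤ V c) (hVR : ∀ c ∈ Finset.range m, V c ≤ R)
    (hsum : ∑ c ∈ Finset.range m, W c = 1)
    (hmean : ∑ c ∈ Finset.range m, W c * V c = q * R) :
    ∀ (n : ℕ) (μ : ℝ), Jg W V m v n μ
      ≤ Jg (fun c => if c = 0 then 1 - q else q) (fun c => if c = 0 then 0 else R) 2 v n μ := by
  intro n
  induction n with
  | zero => intro μ; rw [Jg_zero hv, Jg_zero hv]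
  | succ n ih =>
    intro μ
    rw [Jg_succ hv, Jg_succ hv]
    set A := Jg W V m v n μ with hA
    set B := Real.exp (R * μ / v) * Jg W V m v n (μ + R) with hB
    calc ∑ c ∈ Finset.range m, W c * Real.exp (V c * μ / v) * Jg W V m v n (μ + V c)
        ≤ ∑ c ∈ Finset.range m, W c * ((1 - V c / R) * A + V c / R * B) := by
          refine Finset.sum_le_sum fun c hc => ?_
          have h := Jg_chord (V := V) (m := m) hv hW hR n μ (V c) (hV0 c hc) (hVR c hc)
          have h2 := mul_le_mul_of_nonneg_left h (hW c)
          calc W c * Real.exp (V c * μ / v) * Jg W V m v n (μ + V c)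
              = W c * (Real.exp (V c * μ / v) * Jg W V m v n (μ + V c)) := by ring
            _ ≤ W c * ((1 - V c / R) * A + V c / R * B) := h2
      _ = (1 - q) * A + q * B := by
          have hexp : ∀ c, W c * ((1 - V c / R) * A + V c / R * B)
              = (W c - W c * V c / R) * A + (W c * V c / R) * B := by intro c; ring
          simp only [hexp]
          rw [Finset.sum_add_distrib, ← Finset.sum_mul, ← Finset.sum_mul]
          have s1 : ∑ c ∈ Finset.range m, (W c - W c * V c / R) = 1 - q := by
            rw [Finset.sum_sub_distrib, hsum, ← Finset.sum_div, hmean]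
            field_simp
          have s2 : ∑ c ∈ Finset.range m, W c * V c / R = q := by
            rw [← Finset.sum_div, hmean]
            field_simp
          rw [s1, s2]
      _ ≤ (1 - q) * Jg (fun c => if c = 0 then 1 - q else q)
              (fun c => if c = 0 then 0 else R) 2 v n μ
            + q * (Real.exp (R * μ / v) * Jg (fun c => if c = 0 then 1 - q else q)
              (fun c => if c = 0 then 0 else R) 2 v n (μ + R)) := by
          apply add_le_add
          · exact mul_le_mul_of_nonneg_left (ih μ) (by linarith)
          · exact mul_le_mul_of_nonneg_left
              (mul_le_mul_of_nonneg_left (ih (μ + R)) (Real.exp_pos _).le) hq0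
      _ = ∑ c ∈ Finset.range 2, (if c = 0 then 1 - q else q)
            * Real.exp ((if c = 0 then (0:ℝ) else R) * μ / v)
            * Jg (fun c => if c = 0 then 1 - q else q) (fun c => if c = 0 then 0 else R) 2 v n
                (μ + if c = 0 then 0 else R) := by
          rw [Finset.sum_range_succ, Finset.sum_range_succ, Finset.sum_range_zero]
          norm_num
          ring

lemma binom_sum (p : ℝ) (K : ℕ) :
    ∑ c ∈ Finset.range (K + 1), (K.choose c : ℝ) * p ^ c * (1 - p) ^ (K - c) = 1 := by
  calc ∑ c ∈ Finset.range (K + 1), (K.choose c : ℝ) * p ^ c * (1 - p) ^ (K - c)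
      = ∑ c ∈ Finset.range (K + 1), p ^ c * (1 - p) ^ (K - c) * (K.choose c : ℝ) :=
        Finset.sum_congr rfl fun c _ => by ring
    _ = (p + (1 - p)) ^ K := (add_pow p (1 - p) K).symm
    _ = 1 := by norm_num

lemma binom_mean (p : ℝ) (K : ℕ) (hK : 1 ≤ K) :
    ∑ c ∈ Finset.range (K + 1), ((K.choose c : ℝ) * p ^ c * (1 - p) ^ (K - c)) * (c : ℝ)
      = p * K := by
  obtain ⟨K', rfl⟩ : ∃ K', K = K' + 1 := ⟨K - 1, (Nat.succ_pred_eq_of_pos hK).symm⟩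
  rw [Finset.sum_range_succ']
  simp only [Nat.cast_zero, mul_zero, add_zero]
  have hterm : ∀ c, (((K' + 1).choose (c + 1) : ℝ) * p ^ (c + 1) * (1 - p) ^ (K' + 1 - (c + 1)))
      * ((c + 1 : ℕ) : ℝ)
      = (p * (K' + 1)) * ((K'.choose c : ℝ) * p ^ c * (1 - p) ^ (K' - c)) := by
    intro c
    have hcast : ((K' + 1 : ℕ) : ℝ) * (K'.choose c : ℝ)
        = ((K' + 1).choose (c + 1) : ℝ) * ((c + 1 : ℕ) : ℝ) := by
      exact_mod_cast congrArg (Nat.cast (R := ℝ)) (Nat.add_one_mul_choose_eq K' c)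
    have hsub : K' + 1 - (c + 1) = K' - c := by omega
    rw [hsub, pow_succ]
    push_cast at hcast ⊢
    linear_combination (-(p ^ c * p * (1 - p) ^ (K' - c))) * hcast
  calc ∑ c ∈ Finset.range (K' + 1),
        (((K' + 1).choose (c + 1) : ℝ) * p ^ (c + 1) * (1 - p) ^ (K' + 1 - (c + 1)))
          * ((c + 1 : ℕ) : ℝ)
      = ∑ c ∈ Finset.range (K' + 1),
          (p * (K' + 1)) * ((K'.choose c : ℝ) * p ^ c * (1 - p) ^ (K' - c)) :=
        Finset.sum_congr rfl fun c _ => hterm c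
    _ = p * (K' + 1) := by rw [← Finset.mul_sum, binom_sum p K', mul_one]
    _ = p * ((K' + 1 : ℕ) : ℝ) := by push_cast; ring

lemma integral_gaussianReal_eq {v : ℝ≥0} (hv : v ≠ 0) (μ : ℝ) (f : ℝ → ℝ) :
    ∫ x, f x ∂(gaussianReal μ v) = ∫ x, f x * gaussianPDFReal μ v x := by
  rw [gaussianReal_of_var_ne_zero μ hv]
  have hd : (gaussianPDF μ v) = fun x => (↑(Real.toNNReal (gaussianPDFReal μ v x)) : ℝ≥0∞) := by
    funext x; rfl
  rw [hd, integral_withDensity_eq_integral_smul ((measurable_gaussianPDFReal μ v).real_toNNReal) f]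
  congr 1
  funext x
  rw [NNReal.smul_def, smul_eq_mul, Real.coe_toNNReal _ (gaussianPDFReal_nonneg μ v x), mul_comm]

lemma left_eq (α K : ℕ) (p σ : ℝ) (hσ : 0 < σ) (hK : 1 ≤ K) :
    (∫ x, ((∑ c ∈ Finset.range (K + 1),
        (K.choose c : ℝ) * p ^ c * (1 - p) ^ (K - c) *
          gaussianPDFReal c ⟨(K : ℝ) ^ 2 * σ ^ 2,
            mul_nonneg (sq_nonneg _) (sq_nonneg σ)⟩ x) /
      gaussianPDFReal 0 ⟨(K : ℝ) ^ 2 * σ ^ 2,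
        mul_nonneg (sq_nonneg _) (sq_nonneg σ)⟩ x) ^ (α : ℝ)
    ∂(gaussianReal 0 ⟨(K : ℝ) ^ 2 * σ ^ 2,
        mul_nonneg (sq_nonneg _) (sq_nonneg σ)⟩))
    = Jg (fun c => (K.choose c : ℝ) * p ^ c * (1 - p) ^ (K - c)) (fun c => (c : ℝ)) (K + 1)
        ⟨(K : ℝ) ^ 2 * σ ^ 2, mul_nonneg (sq_nonneg _) (sq_nonneg σ)⟩ α 0 := by
  set vK : ℝ≥0 := ⟨(K : ℝ) ^ 2 * σ ^ 2, mul_nonneg (sq_nonneg _) (sq_nonneg σ)⟩ with hvKdef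
  have hK0 : (0:ℝ) < (K:ℝ) := by exact_mod_cast hK
  have hvK : vK ≠ 0 := by
    intro h
    have h2 : ((vK : ℝ≥0) : ℝ) = 0 := by rw [h]; rfl
    have h3 : ((vK : ℝ≥0) : ℝ) = (K:ℝ)^2 * σ^2 := rfl
    nlinarith [pow_pos hK0 2, pow_pos hσ 2]
  rw [integral_gaussianReal_eq hvK, Jg]
  refine integral_congr_ae (Filter.Eventually.of_forall fun x => ?_)
  beta_reduce
  have hpos := gaussianPDFReal_pos 0 vK x hvK
  have hratio : (∑ c ∈ Finset.range (K + 1),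
      (K.choose c : ℝ) * p ^ c * (1 - p) ^ (K - c) * gaussianPDFReal c vK x) /
        gaussianPDFReal 0 vK x
      = mixg (fun c => (K.choose c : ℝ) * p ^ c * (1 - p) ^ (K - c)) (fun c => (c : ℝ))
          (K + 1) vK x := by
    rw [div_eq_iff hpos.ne', mixg, Finset.sum_mul]
    refine Finset.sum_congr rfl fun c hc => ?_
    have ht := tilt_pdf hvK ((c:ℝ)) 0 x
    simp only [mul_zero, zero_div, Real.exp_zero, one_mul, zero_add] at ht
    rw [← ht]; ring
  rw [hratio, Real.rpow_natCast]

lemma right_eq (α : ℕ) (p σ : ℝ) (hσ : 0 < σ) :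
    (∫ x, (((1 - p) * gaussianPDFReal 0 ⟨σ ^ 2, sq_nonneg σ⟩ x +
          p * gaussianPDFReal 1 ⟨σ ^ 2, sq_nonneg σ⟩ x) /
        gaussianPDFReal 0 ⟨σ ^ 2, sq_nonneg σ⟩ x) ^ (α : ℝ)
      ∂(gaussianReal 0 ⟨σ ^ 2, sq_nonneg σ⟩))
    = Jg (fun c => if c = 0 then 1 - p else p) (fun c => if c = 0 then 0 else 1) 2
        ⟨σ ^ 2, sq_nonneg σ⟩ α 0 := by
  set vs : ℝ≥0 := ⟨σ ^ 2, sq_nonneg σ⟩ with hvsdef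
  have hvs : vs ≠ 0 := by
    intro h
    have h2 : ((vs : ℝ≥0) : ℝ) = 0 := by rw [h]; rfl
    have h3 : ((vs : ℝ≥0) : ℝ) = σ^2 := rfl
    nlinarith [pow_pos hσ 2]
  rw [integral_gaussianReal_eq hvs, Jg]
  refine integral_congr_ae (Filter.Eventually.of_forall fun x => ?_)
  beta_reduce
  have hpos := gaussianPDFReal_pos 0 vs x hvs
  have hratio : ((1 - p) * gaussianPDFReal 0 vs x + p * gaussianPDFReal 1 vs x) /
        gaussianPDFReal 0 vs x
      = mixg (fun c => if c = 0 then 1 - p else p) (fun c => if c = 0 then 0 else 1) 2 vs x := by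
    rw [div_eq_iff hpos.ne', mixg, Finset.sum_range_succ, Finset.sum_range_succ,
      Finset.sum_range_zero]
    norm_num
    have ht := tilt_pdf hvs 1 0 x
    simp only [mul_zero, zero_div, Real.exp_zero, one_mul, zero_add, one_mul] at ht
    rw [← ht]; ring
  rw [hratio, Real.rpow_natCast]

lemma scale_eq (α K : ℕ) (p σ : ℝ) (hσ : 0 < σ) (hK : 1 ≤ K) :
    Jg (fun c => if c = 0 then 1 - p else p) (fun c => if c = 0 then 0 else (K:ℝ)) 2
        ⟨(K : ℝ) ^ 2 * σ ^ 2, mul_nonneg (sq_nonneg _) (sq_nonneg σ)⟩ α 0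
    = Jg (fun c => if c = 0 then 1 - p else p) (fun c => if c = 0 then 0 else 1) 2
        ⟨σ ^ 2, sq_nonneg σ⟩ α 0 := by
  set vK : ℝ≥0 := ⟨(K : ℝ) ^ 2 * σ ^ 2, mul_nonneg (sq_nonneg _) (sq_nonneg σ)⟩ with hvKdef
  set vs : ℝ≥0 := ⟨σ ^ 2, sq_nonneg σ⟩ with hvsdef
  have hK0 : (0:ℝ) < (K:ℝ) := by exact_mod_cast hK
  have hcK : ((vK : ℝ≥0) : ℝ) = (K:ℝ)^2 * σ^2 := rfl
  have hcs : ((vs : ℝ≥0) : ℝ) = σ^2 := rfl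
  set G : ℝ → ℝ := fun x =>
    (mixg (fun c => if c = 0 then 1 - p else p) (fun c => if c = 0 then 0 else (K:ℝ)) 2 vK x) ^ α
      * gaussianPDFReal 0 vK x with hG
  have hpt : ∀ y : ℝ,
      (mixg (fun c => if c = 0 then 1 - p else p) (fun c => if c = 0 then 0 else 1) 2 vs y) ^ α
        * gaussianPDFReal 0 vs y = (K:ℝ) * G ((K:ℝ) * y) := by
    intro y
    have hm : mixg (fun c => if c = 0 then 1 - p else p)
        (fun c => if c = 0 then 0 else (K:ℝ)) 2 vK ((K:ℝ) * y)
        = mixg (fun c => if c = 0 then 1 - p else p) (fun c => if c = 0 then 0 else 1) 2 vs y := by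
      rw [mixg, mixg, Finset.sum_range_succ, Finset.sum_range_succ, Finset.sum_range_zero,
        Finset.sum_range_succ, Finset.sum_range_succ, Finset.sum_range_zero]
      simp only [reduceIte, one_ne_zero]
      have e2 : ((K:ℝ) * ((K:ℝ) * y) - (K:ℝ) ^ 2 / 2) / ((vK : ℝ≥0) : ℝ)
          = ((1:ℝ) * y - (1:ℝ) ^ 2 / 2) / ((vs : ℝ≥0) : ℝ) := by
        rw [hcK, hcs]; field_simp
      have z1 : ((0:ℝ) * ((K:ℝ) * y) - (0:ℝ) ^ 2 / 2) / ((vK : ℝ≥0) : ℝ) = 0 := by norm_num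
      have z2 : ((0:ℝ) * y - (0:ℝ) ^ 2 / 2) / ((vs : ℝ≥0) : ℝ) = 0 := by norm_num
      rw [e2, z1, z2]
    have hpdf : gaussianPDFReal 0 vK ((K:ℝ) * y) = (K:ℝ)⁻¹ * gaussianPDFReal 0 vs y := by
      simp only [gaussianPDFReal]
      rw [hcK, hcs, show (2 * π * ((K:ℝ)^2 * σ^2)) = (K:ℝ)^2 * (2 * π * σ^2) from by ring,
        Real.sqrt_mul (sq_nonneg (K:ℝ)), Real.sqrt_sq hK0.le, mul_inv]
      rw [show (-((K:ℝ) * y - 0)^2 / (2 * ((K:ℝ)^2 * σ^2))) = -(y - 0)^2 / (2 * σ^2) from by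
        field_simp; ring]
      ring
    rw [hG]
    beta_reduce
    rw [hm, hpdf, mul_left_comm ((K:ℝ)), ← mul_assoc ((K:ℝ)), mul_inv_cancel₀ hK0.ne', one_mul]
  calc Jg (fun c => if c = 0 then 1 - p else p) (fun c => if c = 0 then 0 else (K:ℝ)) 2 vK α 0
      = ∫ x, G x := rfl
    _ = (K:ℝ) * (|((K:ℝ))⁻¹| • ∫ x, G x) := by
        rw [smul_eq_mul, abs_of_pos (inv_pos.mpr hK0), ← mul_assoc, mul_inv_cancel₀ hK0.ne',
          one_mul]
    _ = (K:ℝ) * ∫ y, G ((K:ℝ) * y) := by rw [Measure.integral_comp_mul_left G (K:ℝ)]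
    _ = ∫ y, (K:ℝ) * G ((K:ℝ) * y) := (MeasureTheory.integral_const_mul _ _).symm
    _ = Jg (fun c => if c = 0 then 1 - p else p) (fun c => if c = 0 then 0 else 1) 2 vs α 0 := by
        rw [Jg]
        exact integral_congr_ae (Filter.Eventually.of_forall fun y => (hpt y).symm)

lemma Jg_pos_left (α K : ℕ) (p σ : ℝ) (hσ : 0 < σ) (hK : 1 ≤ K) (hp0 : 0 ≤ p) (hp1 : p ≤ 1) :
    0 < Jg (fun c => (K.choose c : ℝ) * p ^ c * (1 - p) ^ (K - c)) (fun c => (c : ℝ)) (K + 1)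
        ⟨(K : ℝ) ^ 2 * σ ^ 2, mul_nonneg (sq_nonneg _) (sq_nonneg σ)⟩ α 0 := by
  set vK : ℝ≥0 := ⟨(K : ℝ) ^ 2 * σ ^ 2, mul_nonneg (sq_nonneg _) (sq_nonneg σ)⟩ with hvKdef
  have hK0 : (0:ℝ) < (K:ℝ) := by exact_mod_cast hK
  have hvK : vK ≠ 0 := by
    intro h
    have h2 : ((vK : ℝ≥0) : ℝ) = 0 := by rw [h]; rfl
    have h3 : ((vK : ℝ≥0) : ℝ) = (K:ℝ)^2 * σ^2 := rfl
    nlinarith [pow_pos hK0 2, pow_pos hσ 2]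
  have hmixpos : ∀ x, 0 < mixg (fun c => (K.choose c : ℝ) * p ^ c * (1 - p) ^ (K - c))
      (fun c => (c : ℝ)) (K + 1) vK x := by
    intro x
    rw [mixg]
    apply Finset.sum_pos'
    · intro c _
      have h1p : (0:ℝ) ≤ 1 - p := by linarith
      exact mul_nonneg (mul_nonneg (mul_nonneg (Nat.cast_nonneg _) (pow_nonneg hp0 _))
        (pow_nonneg h1p _)) (Real.exp_pos _).le
    · by_cases hp : p < 1
      · refine ⟨0, Finset.mem_range.mpr (Nat.succ_pos K), ?_⟩
        have h1p : (0:ℝ) < 1 - p := by linarith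
        simp only [Nat.choose_zero_right, Nat.cast_one, pow_zero, one_mul, Nat.sub_zero]
        exact mul_pos (pow_pos h1p K) (Real.exp_pos _)
      · have hp' : p = 1 := le_antisymm hp1 (not_lt.mp hp)
        refine ⟨K, Finset.mem_range.mpr (Nat.lt_succ_self K), ?_⟩
        simp [hp', Nat.sub_self, Real.exp_pos]
  have hint := integrable_mixg_pow
    (W := fun c => (K.choose c : ℝ) * p ^ c * (1 - p) ^ (K - c))
    (V := fun c => (c : ℝ)) (m := K + 1) hvK 0 α
  have hnn : (0:ℝ → ℝ) ≤ fun x => (mixg (fun c => (K.choose c : ℝ) * p ^ c * (1 - p) ^ (K - c))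
      (fun c => (c : ℝ)) (K + 1) vK x) ^ α * gaussianPDFReal 0 vK x :=
    fun x => mul_nonneg (pow_nonneg (hmixpos x).le α) (gaussianPDFReal_nonneg _ _ _)
  rw [Jg, integral_pos_iff_support_of_nonneg hnn hint]
  have hsupp : Function.support (fun x => (mixg (fun c => (K.choose c : ℝ) * p ^ c
      * (1 - p) ^ (K - c)) (fun c => (c : ℝ)) (K + 1) vK x) ^ α * gaussianPDFReal 0 vK x)
      = Set.univ :=
    Set.eq_univ_of_forall fun x =>
      (mul_pos (pow_pos (hmixpos x) α) (gaussianPDFReal_pos _ _ _ hvK)).ne'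
  rw [hsupp, Real.volume_univ]
  exact ENNReal.zero_lt_top

/-- Lemma (conj-ub): for integers `α > 1`, `K ≥ 1`, `p ∈ [0,1]`, `σ > 0`,
`R_α(N(Bin(K,p), K²σ²), N(0, K²σ²)) ≤ R_α(N(Bern(p), σ²), N(0, σ²))`, where `N(X, v)`
denotes the Gaussian mixture `Σ_c Pr[X=c]·N(c, v)` and Rényi divergence is expressed
via densities. -/
theorem renyi_binomial_le_bernoulli (α K : ℕ) (hα : 1 < α) (hK : 1 ≤ K)
    (p : ℝ) (hp0 : 0 ≤ p) (hp1 : p ≤ 1) (σ : ℝ) (hσ : 0 < σ) :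
    (1 / ((α : ℝ) - 1)) * Real.log (∫ x,
        ((∑ c ∈ Finset.range (K + 1),
            (K.choose c : ℝ) * p ^ c * (1 - p) ^ (K - c) *
              gaussianPDFReal c ⟨(K : ℝ) ^ 2 * σ ^ 2,
                mul_nonneg (sq_nonneg _) (sq_nonneg σ)⟩ x) /
          gaussianPDFReal 0 ⟨(K : ℝ) ^ 2 * σ ^ 2,
            mul_nonneg (sq_nonneg _) (sq_nonneg σ)⟩ x) ^ (α : ℝ)
        ∂(gaussianReal 0 ⟨(K : ℝ) ^ 2 * σ ^ 2,
            mul_nonneg (sq_nonneg _) (sq_nonneg σ)⟩)) ≤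
      (1 / ((α : ℝ) - 1)) * Real.log (∫ x,
        (((1 - p) * gaussianPDFReal 0 ⟨σ ^ 2, sq_nonneg σ⟩ x +
            p * gaussianPDFReal 1 ⟨σ ^ 2, sq_nonneg σ⟩ x) /
          gaussianPDFReal 0 ⟨σ ^ 2, sq_nonneg σ⟩ x) ^ (α : ℝ)
        ∂(gaussianReal 0 ⟨σ ^ 2, sq_nonneg σ⟩)) := by
  have hα1 : (1:ℝ) < (α:ℝ) := by exact_mod_cast hα
  have hK0 : (0:ℝ) < (K:ℝ) := by exact_mod_cast hK
  have hvK : (⟨(K : ℝ) ^ 2 * σ ^ 2, mul_nonneg (sq_nonneg _) (sq_nonneg σ)⟩ : ℝ≥0) ≠ 0 := by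
    intro h
    have h2 : ((⟨(K : ℝ) ^ 2 * σ ^ 2, mul_nonneg (sq_nonneg _) (sq_nonneg σ)⟩ : ℝ≥0) : ℝ) = 0 := by
      rw [h]; rfl
    have h3 : ((⟨(K : ℝ) ^ 2 * σ ^ 2, mul_nonneg (sq_nonneg _) (sq_nonneg σ)⟩ : ℝ≥0) : ℝ)
        = (K:ℝ)^2 * σ^2 := rfl
    nlinarith [pow_pos hK0 2, pow_pos hσ 2]
  rw [left_eq α K p σ hσ hK, right_eq α p σ hσ]
  have hW : ∀ c, 0 ≤ (K.choose c : ℝ) * p ^ c * (1 - p) ^ (K - c) := fun c =>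
    mul_nonneg (mul_nonneg (Nat.cast_nonneg _) (pow_nonneg hp0 _))
      (pow_nonneg (by linarith) _)
  have hcomp := Jg_le_two hvK hW hK0 hp0 hp1
    (fun c _ => Nat.cast_nonneg c)
    (fun c hc => Nat.cast_le.mpr (Nat.lt_succ_iff.mp (Finset.mem_range.mp hc)))
    (binom_sum p K) (binom_mean p K hK) α 0
  rw [scale_eq α K p σ hσ hK] at hcomp
  have hpos := Jg_pos_left α K p σ hσ hK hp0 hp1
  have hcoef : 0 ≤ 1 / ((α:ℝ) - 1) := div_nonneg zero_le_one (by linarith)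
  exact mul_le_mul_of_nonneg_left
    ((Real.log_le_log_iff hpos (lt_of_lt_of_le hpos hcomp)).mpr hcomp) hcoef
end

section
/- Monotonicity of Rényi divergence of mean-shifted Gaussians in the noise parameter: for fixed mean-distribution X (a random variable on ℝ with bounded support) and α > 1, the map σ ↦ R_α( N(X, σ²), N(0, σ²) ) is non-increasing on (0, ∞), where N(X, σ²) is the Gaussian mixture with mean distributed as X. -/
open MeasureTheory ProbabilityTheory Real
open scoped NNReal ENNReal

lemma integral_gaussianReal' (μ : ℝ) {v : ℝ≥0} (hv : v ≠ 0) (f : ℝ → ℝ) :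
    ∫ x, f x ∂(gaussianReal μ v) = ∫ x, gaussianPDFReal μ v x * f x := by
  rw [gaussianReal_of_var_ne_zero _ hv]
  have h : gaussianPDF μ v = fun x => ((gaussianPDFReal μ v x).toNNReal : ℝ≥0∞) := rfl
  rw [h, integral_withDensity_eq_integral_smul
    ((measurable_gaussianPDFReal μ v).real_toNNReal) f]
  congr 1; ext x
  simp [NNReal.smul_def, Real.coe_toNNReal _ (gaussianPDFReal_nonneg μ v x)]

lemma integrable_gaussianReal_iff (μ : ℝ) {v : ℝ≥0} (hv : v ≠ 0) (f : ℝ → ℝ) :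
    Integrable f (gaussianReal μ v) ↔ Integrable (fun x => gaussianPDFReal μ v x * f x) := by
  rw [gaussianReal_of_var_ne_zero _ hv]
  have h : gaussianPDF μ v = fun x => ((gaussianPDFReal μ v x).toNNReal : ℝ≥0∞) := rfl
  rw [h, integrable_withDensity_iff_integrable_smul
    ((measurable_gaussianPDFReal μ v).real_toNNReal)]
  apply integrable_congr
  filter_upwards with x
  simp [NNReal.smul_def, Real.coe_toNNReal _ (gaussianPDFReal_nonneg μ v x)]

lemma pdf_shift (c x : ℝ) :
    gaussianPDFReal 0 1 x * rexp (c * x) = rexp (c ^ 2 / 2) * gaussianPDFReal c 1 x := by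
  simp only [gaussianPDFReal, NNReal.coe_one, mul_one]
  rw [mul_assoc, ← Real.exp_add, mul_comm (rexp (c ^ 2 / 2)), mul_assoc, ← Real.exp_add]
  congr 1
  ring_nf

lemma integral_exp_gaussian (c : ℝ) :
    ∫ z, rexp (c * z) ∂(gaussianReal 0 1) = rexp (c ^ 2 / 2) := by
  rw [integral_gaussianReal' 0 one_ne_zero]
  simp_rw [pdf_shift c]
  rw [integral_const_mul, integral_gaussianPDFReal_eq_one c one_ne_zero, mul_one]

lemma integrable_exp_gaussian (c : ℝ) :
    Integrable (fun z => rexp (c * z)) (gaussianReal 0 1) := by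
  rw [integrable_gaussianReal_iff 0 one_ne_zero]
  have : (fun x => gaussianPDFReal 0 1 x * rexp (c * x))
      = fun x => rexp (c ^ 2 / 2) * gaussianPDFReal c 1 x := by
    ext x; exact pdf_shift c x
  rw [this]
  exact (integrable_gaussianPDFReal c 1).const_mul _

lemma integrable_exp_abs_gaussian (c : ℝ) :
    Integrable (fun z => rexp (c * |z|)) (gaussianReal 0 1) := by
  refine Integrable.mono' ((integrable_exp_gaussian c).add (integrable_exp_gaussian (-c)))
    ?_ ?_
  · exact (Real.continuous_exp.comp (continuous_const.mul continuous_abs)).aestronglyMeasurable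
  · filter_upwards with z
    rw [Real.norm_eq_abs, abs_of_nonneg (Real.exp_nonneg _)]
    rcases abs_choice z with h | h
    · rw [h]; exact le_add_of_nonneg_right (Real.exp_nonneg _)
    · rw [h, show c * -z = -c * z by ring]; exact le_add_of_nonneg_left (Real.exp_nonneg _)

noncomputable def Haux (ν : Measure ℝ) (t z : ℝ) : ℝ :=
  ∫ m, rexp (t * m * z - t ^ 2 * m ^ 2 / 2) ∂ν

noncomputable def Gaux (ν : Measure ℝ) (α t : ℝ) : ℝ :=
  ∫ z, (Haux ν t z) ^ α ∂(gaussianReal 0 1)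

section Hlemmas
variable (ν : Measure ℝ) [IsProbabilityMeasure ν] {C : ℝ} {t z : ℝ}

lemma measurable_Haux (t : ℝ) : Measurable (fun z => Haux ν t z) := by
  have hc : Continuous (fun p : ℝ × ℝ => rexp (t * p.2 * p.1 - t ^ 2 * p.2 ^ 2 / 2)) := by
    fun_prop
  exact (StronglyMeasurable.integral_prod_right' (f := fun p : ℝ × ℝ =>
    rexp (t * p.2 * p.1 - t ^ 2 * p.2 ^ 2 / 2)) hc.stronglyMeasurable).measurable

lemma phi_exponent_le (hm : |m| ≤ C) : t * m * z - t ^ 2 * m ^ 2 / 2 ≤ |t| * C * |z| := by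
  have h1 : t * m * z ≤ |t| * C * |z| := by
    calc t * m * z ≤ |t * m * z| := le_abs_self _
    _ = |t| * |m| * |z| := by rw [abs_mul, abs_mul]
    _ ≤ |t| * C * |z| := mul_le_mul_of_nonneg_right
        (mul_le_mul_of_nonneg_left hm (abs_nonneg t)) (abs_nonneg z)
  nlinarith [sq_nonneg (t * m)]

lemma phi_exponent_ge (hm : |m| ≤ C) :
    -(|t| * C * |z|) - t ^ 2 * C ^ 2 / 2 ≤ t * m * z - t ^ 2 * m ^ 2 / 2 := by
  have h1 : -(|t| * C * |z|) ≤ t * m * z := by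
    have : |t * m * z| ≤ |t| * C * |z| := by
      rw [abs_mul, abs_mul]
      exact mul_le_mul_of_nonneg_right
        (mul_le_mul_of_nonneg_left hm (abs_nonneg t)) (abs_nonneg z)
    linarith [neg_abs_le (t * m * z)]
  have h2 : m ^ 2 ≤ C ^ 2 := by
    have := abs_nonneg m
    nlinarith [sq_abs m]
  nlinarith [sq_nonneg t]

lemma integrable_phi (hC : ∀ᵐ m ∂ν, |m| ≤ C) (t z : ℝ) :
    Integrable (fun m => rexp (t * m * z - t ^ 2 * m ^ 2 / 2)) ν := by
  refine Integrable.mono' (integrable_const (rexp (|t| * C * |z|))) ?_ ?_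
  · exact (Real.continuous_exp.comp (by fun_prop)).aestronglyMeasurable
  · filter_upwards [hC] with m hm
    rw [Real.norm_eq_abs, abs_of_nonneg (Real.exp_nonneg _)]
    exact Real.exp_le_exp.mpr (phi_exponent_le hm)

lemma Haux_le (hC : ∀ᵐ m ∂ν, |m| ≤ C) (t z : ℝ) :
    Haux ν t z ≤ rexp (|t| * C * |z|) := by
  have := integral_mono_ae (integrable_phi ν hC t z)
    (integrable_const (rexp (|t| * C * |z|)))
    (by filter_upwards [hC] with m hm; exact Real.exp_le_exp.mpr (phi_exponent_le hm))
  simpa [Haux] using this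

lemma Haux_pos (hC : ∀ᵐ m ∂ν, |m| ≤ C) (t z : ℝ) : 0 < Haux ν t z := by
  have h := integral_mono_ae
    (integrable_const (rexp (-(|t| * C * |z|) - t ^ 2 * C ^ 2 / 2)))
    (integrable_phi ν hC t z)
    (by filter_upwards [hC] with m hm; exact Real.exp_le_exp.mpr (phi_exponent_ge hm))
  simp only [integral_const, measure_univ, ENNReal.toReal_one, probReal_univ, one_smul] at h
  exact lt_of_lt_of_le (Real.exp_pos _) h

lemma Haux_rpow_le (hC : ∀ᵐ m ∂ν, |m| ≤ C) {α : ℝ} (hα : 0 ≤ α) (t z : ℝ) :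
    (Haux ν t z) ^ α ≤ rexp ((|t| * C * α) * |z|) := by
  calc (Haux ν t z) ^ α ≤ (rexp (|t| * C * |z|)) ^ α :=
        Real.rpow_le_rpow (Haux_pos ν hC t z).le (Haux_le ν hC t z) hα
  _ = rexp ((|t| * C * α) * |z|) := by rw [← Real.exp_mul]; ring_nf

lemma integrable_Haux_rpow (hC : ∀ᵐ m ∂ν, |m| ≤ C) {α : ℝ} (hα : 0 ≤ α) (t : ℝ) :
    Integrable (fun z => (Haux ν t z) ^ α) (gaussianReal 0 1) := by
  refine Integrable.mono' (integrable_exp_abs_gaussian (|t| * C * α)) ?_ ?_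
  · exact ((Real.continuous_rpow_const hα).measurable.comp (measurable_Haux ν t)).aestronglyMeasurable
  · filter_upwards with z
    rw [Real.norm_eq_abs, abs_of_nonneg (Real.rpow_nonneg (Haux_pos ν hC t z).le _)]
    exact Haux_rpow_le ν hC hα t z

lemma Gaux_pos (hC : ∀ᵐ m ∂ν, |m| ≤ C) {α : ℝ} (hα : 0 ≤ α) (t : ℝ) :
    0 < Gaux ν α t := by
  rw [Gaux, integral_pos_iff_support_of_nonneg_ae
    (Filter.Eventually.of_forall fun z => Real.rpow_nonneg (Haux_pos ν hC t z).le _)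
    (integrable_Haux_rpow ν hC hα t)]
  have : Function.support (fun z => (Haux ν t z) ^ α) = Set.univ := by
    ext z
    simp [Function.mem_support, (Real.rpow_pos_of_pos (Haux_pos ν hC t z) α).ne']
  rw [this]
  simp

end Hlemmas

section Key
variable (ν : Measure ℝ) [IsProbabilityMeasure ν] {C : ℝ}

lemma key_phi {t r τ : ℝ} (hτ2 : τ ^ 2 = 1 - r ^ 2) (m x : ℝ) :
    ∫ w, rexp (t * m * (r * x + τ * w) - t ^ 2 * m ^ 2 / 2) ∂(gaussianReal 0 1)
      = rexp ((t * r) * m * x - (t * r) ^ 2 * m ^ 2 / 2) := by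
  have h : ∀ w, t * m * (r * x + τ * w) - t ^ 2 * m ^ 2 / 2
      = (t * m * r * x - t ^ 2 * m ^ 2 / 2) + (t * m * τ) * w := fun w => by ring
  simp_rw [h, Real.exp_add]
  rw [integral_const_mul, integral_exp_gaussian, ← Real.exp_add]
  congr 1
  linear_combination (t ^ 2 * m ^ 2 / 2) * hτ2

lemma key_H (hC : ∀ᵐ m ∂ν, |m| ≤ C) {t r τ : ℝ} (hτ2 : τ ^ 2 = 1 - r ^ 2) (x : ℝ) :
    Haux ν (t * r) x = ∫ w, Haux ν t (r * x + τ * w) ∂(gaussianReal 0 1) := by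
  have hint : Integrable (Function.uncurry fun m w =>
      rexp (t * m * (r * x + τ * w) - t ^ 2 * m ^ 2 / 2)) (ν.prod (gaussianReal 0 1)) := by
    rw [integrable_prod_iff]
    · constructor
      · filter_upwards with m
        have h : ∀ w, t * m * (r * x + τ * w) - t ^ 2 * m ^ 2 / 2
            = (t * m * r * x - t ^ 2 * m ^ 2 / 2) + (t * m * τ) * w := fun w => by ring
        simp only [Function.uncurry_apply_pair]
        simp_rw [h, Real.exp_add]
        exact (integrable_exp_gaussian (t * m * τ)).const_mul _
      · apply Integrable.congr (integrable_phi ν hC (t * r) x)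
        filter_upwards with m
        simp only [Function.uncurry_apply_pair]
        rw [← key_phi hτ2 m x]
        rw [integral_congr_ae (Filter.Eventually.of_forall fun w =>
          (Real.norm_eq_abs _).trans (abs_of_nonneg (Real.exp_nonneg _)))]
    · apply Continuous.aestronglyMeasurable
      fun_prop
  have h1 : Haux ν (t * r) x
      = ∫ m, (∫ w, rexp (t * m * (r * x + τ * w) - t ^ 2 * m ^ 2 / 2)
          ∂(gaussianReal 0 1)) ∂ν := by
    rw [Haux]
    exact integral_congr_ae (Filter.Eventually.of_forall fun m => (key_phi hτ2 m x).symm)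
  rw [h1, integral_integral_swap hint]
  rfl

end Key

section Mix

lemma pdf_sym {r τ : ℝ} (h1 : r ^ 2 + τ ^ 2 = 1) (hτ : 0 < τ) (x y : ℝ) :
    gaussianPDFReal 0 1 x * gaussianPDFReal (r * x) ⟨τ ^ 2, sq_nonneg τ⟩ y
      = gaussianPDFReal 0 1 y * gaussianPDFReal (r * y) ⟨τ ^ 2, sq_nonneg τ⟩ x := by
  simp only [gaussianPDFReal, NNReal.coe_mk, NNReal.coe_one, mul_one]
  dsimp only [NNReal.toReal]
  have hτ2 : τ ^ 2 ≠ 0 := by positivity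
  have hE : rexp (-(x - 0) ^ 2 / 2) * rexp (-(y - r * x) ^ 2 / (2 * τ ^ 2))
      = rexp (-(y - 0) ^ 2 / 2) * rexp (-(x - r * y) ^ 2 / (2 * τ ^ 2)) := by
    rw [← Real.exp_add, ← Real.exp_add]
    congr 1
    field_simp
    linear_combination (y ^ 2 - x ^ 2) * h1
  linear_combination ((√(2 * π))⁻¹ * (√(2 * π * τ ^ 2))⁻¹) * hE

lemma map_affine_gaussian (c τ : ℝ) :
    Measure.map (fun w => c + τ * w) (gaussianReal 0 1)
      = gaussianReal c ⟨τ ^ 2, sq_nonneg τ⟩ := by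
  have h := Measure.map_map (μ := gaussianReal 0 1) (g := (· + c)) (f := (τ * ·))
    (measurable_add_const c) (measurable_const_mul τ)
  rw [gaussianReal_map_const_mul τ, gaussianReal_map_add_const] at h
  have hf : ((· + c) ∘ (τ * ·)) = fun w : ℝ => c + τ * w := by ext w; simp [add_comm]
  rw [hf] at h
  rw [← h]
  norm_num
  rfl

lemma lmix (g : ℝ → ℝ≥0∞) (hg : Measurable g) {r τ : ℝ} (h1 : r ^ 2 + τ ^ 2 = 1)
    (hτ : 0 < τ) :
    ∫⁻ x, ∫⁻ w, g (r * x + τ * w) ∂(gaussianReal 0 1) ∂(gaussianReal 0 1)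
      = ∫⁻ y, g y ∂(gaussianReal 0 1) := by
  set Vτ : ℝ≥0 := ⟨τ ^ 2, sq_nonneg τ⟩ with hVτdef
  have hVτ : Vτ ≠ 0 := by
    intro h
    have h2 := congrArg NNReal.toReal h
    simp only [hVτdef, NNReal.coe_mk, NNReal.coe_zero] at h2
    exact (by positivity : (0:ℝ) < τ ^ 2).ne' h2
  have hpdfc : Continuous (fun p : ℝ × ℝ => gaussianPDFReal (r * p.1) Vτ p.2) := by
    unfold gaussianPDFReal; fun_prop
  have hpm : Measurable (fun p : ℝ × ℝ => gaussianPDF (r * p.1) Vτ p.2) :=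
    hpdfc.measurable.ennreal_ofReal
  have hpm' : Measurable (fun p : ℝ × ℝ => gaussianPDF (r * p.2) Vτ p.1) :=
    (hpdfc.comp continuous_swap).measurable.ennreal_ofReal
  have hsym : ∀ x y : ℝ, gaussianPDF 0 1 x * gaussianPDF (r * x) Vτ y
      = gaussianPDF 0 1 y * gaussianPDF (r * y) Vτ x := by
    intro x y
    simp only [gaussianPDF]
    rw [← ENNReal.ofReal_mul (gaussianPDFReal_nonneg _ _ _),
      ← ENNReal.ofReal_mul (gaussianPDFReal_nonneg _ _ _), pdf_sym h1 hτ x y]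
  have hinner : ∀ x : ℝ, ∫⁻ w, g (r * x + τ * w) ∂(gaussianReal 0 1)
      = ∫⁻ y, gaussianPDF (r * x) Vτ y * g y := by
    intro x
    rw [← lintegral_map hg (by fun_prop), map_affine_gaussian (r * x) τ,
      gaussianReal_of_var_ne_zero _ hVτ,
      lintegral_withDensity_eq_lintegral_mul _ (measurable_gaussianPDF _ _) hg]
    rfl
  simp_rw [hinner]
  have houter : Measurable (fun x => ∫⁻ y, gaussianPDF (r * x) Vτ y * g y) := by
    apply Measurable.lintegral_prod_right'
      (f := fun p : ℝ × ℝ => gaussianPDF (r * p.1) Vτ p.2 * g p.2)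
    exact hpm.mul (hg.comp measurable_snd)
  rw [gaussianReal_of_var_ne_zero 0 one_ne_zero,
    lintegral_withDensity_eq_lintegral_mul _ (measurable_gaussianPDF _ _) houter,
    lintegral_withDensity_eq_lintegral_mul _ (measurable_gaussianPDF _ _) hg]
  simp only [Pi.mul_apply]
  have step1 : ∀ x : ℝ, gaussianPDF 0 1 x * ∫⁻ y, gaussianPDF (r * x) Vτ y * g y
      = ∫⁻ y, (gaussianPDF 0 1 y * g y) * gaussianPDF (r * y) Vτ x := by
    intro x
    rw [← lintegral_const_mul _ (f := fun y => gaussianPDF (r * x) Vτ y * g y) ((measurable_gaussianPDF _ _).mul hg)]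
    congr 1; ext y
    rw [← mul_assoc, hsym x y]
    ring
  simp_rw [step1]
  rw [lintegral_lintegral_swap]
  · congr 1; ext y
    rw [lintegral_const_mul _ (measurable_gaussianPDF (r * y) Vτ),
      lintegral_gaussianPDF_eq_one (r * y) hVτ, mul_one]
  · apply AEMeasurable.mul
    · exact (((measurable_gaussianPDF 0 1).comp measurable_snd).mul
        (hg.comp measurable_snd)).aemeasurable
    · exact hpm'.aemeasurable

end Mix

section Bridge

lemma mix_bochner (g : ℝ → ℝ) (hm : Measurable g) (hg0 : ∀ y, 0 ≤ g y)
    {r τ : ℝ} (h1 : r ^ 2 + τ ^ 2 = 1) (hτ : 0 < τ)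
    (hgi : Integrable g (gaussianReal 0 1)) :
    ∫ x, ∫ w, g (r * x + τ * w) ∂(gaussianReal 0 1) ∂(gaussianReal 0 1)
      = ∫ y, g y ∂(gaussianReal 0 1) := by
  set G : ℝ → ℝ≥0∞ := fun y => ENNReal.ofReal (g y) with hGdef
  have hGm : Measurable G := hm.ennreal_ofReal
  have hL := lmix G hGm h1 hτ
  have hfin : ∫⁻ y, G y ∂(gaussianReal 0 1) ≠ ⊤ := hgi.lintegral_lt_top.ne
  have hinm : Measurable (fun x => ∫⁻ w, G (r * x + τ * w) ∂(gaussianReal 0 1)) := by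
    apply Measurable.lintegral_prod_right' (f := fun p : ℝ × ℝ => G (r * p.1 + τ * p.2))
    exact hGm.comp (by fun_prop)
  have hae : ∀ᵐ x ∂(gaussianReal 0 1),
      (∫⁻ w, G (r * x + τ * w) ∂(gaussianReal 0 1)) < ⊤ :=
    ae_lt_top hinm (by rw [hL]; exact hfin)
  have hpt : ∀ x : ℝ, ∫ w, g (r * x + τ * w) ∂(gaussianReal 0 1)
      = (∫⁻ w, G (r * x + τ * w) ∂(gaussianReal 0 1)).toReal := by
    intro x
    rw [integral_eq_lintegral_of_nonneg_ae (Filter.Eventually.of_forall fun w => hg0 _)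
      ((hm.comp (by fun_prop : Measurable fun w : ℝ => r * x + τ * w)).aestronglyMeasurable)]
  calc ∫ x, ∫ w, g (r * x + τ * w) ∂(gaussianReal 0 1) ∂(gaussianReal 0 1)
      = ∫ x, (∫⁻ w, G (r * x + τ * w) ∂(gaussianReal 0 1)).toReal ∂(gaussianReal 0 1) := by
        exact integral_congr_ae (Filter.Eventually.of_forall hpt)
    _ = (∫⁻ x, ∫⁻ w, G (r * x + τ * w) ∂(gaussianReal 0 1) ∂(gaussianReal 0 1)).toReal :=
        integral_toReal hinm.aemeasurable hae
    _ = (∫⁻ y, G y ∂(gaussianReal 0 1)).toReal := by rw [hL]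
    _ = ∫ y, g y ∂(gaussianReal 0 1) := by
        rw [integral_eq_lintegral_of_nonneg_ae (Filter.Eventually.of_forall hg0)
          hm.aestronglyMeasurable]

end Bridge

section Mono
variable (ν : Measure ℝ) [IsProbabilityMeasure ν] {C : ℝ}

lemma abs_affine_le {r τ x w : ℝ} (hr : 0 ≤ r) (hτ : 0 ≤ τ) :
    |r * x + τ * w| ≤ r * |x| + τ * |w| := by
  calc |r * x + τ * w| ≤ |r * x| + |τ * w| := abs_add_le _ _
  _ = r * |x| + τ * |w| := by rw [abs_mul, abs_mul, abs_of_nonneg hr, abs_of_nonneg hτ]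

lemma Haux_affine_le (hC : ∀ᵐ m ∂ν, |m| ≤ C) (hC0 : 0 ≤ C) {t r τ : ℝ}
    (hr : 0 ≤ r) (hτ : 0 ≤ τ) (x w : ℝ) :
    Haux ν t (r * x + τ * w) ≤ rexp ((|t| * C * r) * |x|) * rexp ((|t| * C * τ) * |w|) := by
  calc Haux ν t (r * x + τ * w) ≤ rexp (|t| * C * |r * x + τ * w|) := Haux_le ν hC _ _
  _ ≤ rexp ((|t| * C * r) * |x|) * rexp ((|t| * C * τ) * |w|) := by
      rw [← Real.exp_add]
      apply Real.exp_le_exp.mpr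
      have h := abs_affine_le (x := x) (w := w) hr hτ
      have h0 : 0 ≤ |t| * C := mul_nonneg (abs_nonneg t) hC0
      nlinarith

lemma Haux_rpow_affine_le (hC : ∀ᵐ m ∂ν, |m| ≤ C) (hC0 : 0 ≤ C) {α t r τ : ℝ}
    (hα : 0 ≤ α) (hr : 0 ≤ r) (hτ : 0 ≤ τ) (x w : ℝ) :
    (Haux ν t (r * x + τ * w)) ^ α
      ≤ rexp ((|t| * C * α * r) * |x|) * rexp ((|t| * C * α * τ) * |w|) := by
  calc (Haux ν t (r * x + τ * w)) ^ α ≤ rexp ((|t| * C * α) * |r * x + τ * w|) :=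
        Haux_rpow_le ν hC hα _ _
  _ ≤ _ := by
      rw [← Real.exp_add]
      apply Real.exp_le_exp.mpr
      have h := abs_affine_le (x := x) (w := w) hr hτ
      have h0 : 0 ≤ |t| * C * α := by positivity
      nlinarith

lemma Gaux_le (hC : ∀ᵐ m ∂ν, |m| ≤ C) (hC0 : 0 ≤ C) {α : ℝ} (hα : 1 < α)
    {t r : ℝ} (ht : 0 < t) (hr0 : 0 < r) (hr1 : r < 1) :
    Gaux ν α (t * r) ≤ Gaux ν α t := by
  set τ : ℝ := Real.sqrt (1 - r ^ 2) with hτdef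
  have hτ2 : τ ^ 2 = 1 - r ^ 2 := Real.sq_sqrt (by nlinarith)
  have hτpos : 0 < τ := Real.sqrt_pos.mpr (by nlinarith)
  have h1 : r ^ 2 + τ ^ 2 = 1 := by rw [hτ2]; ring
  have hα0 : (0:ℝ) ≤ α := le_of_lt (lt_trans one_pos hα)
  have hgm : Measurable (fun y => (Haux ν t y) ^ α) :=
    (Real.continuous_rpow_const hα0).measurable.comp (measurable_Haux ν t)
  -- integrability of slices
  have hslice : ∀ x : ℝ, Integrable (fun w => Haux ν t (r * x + τ * w)) (gaussianReal 0 1) := by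
    intro x
    refine Integrable.mono' (((integrable_exp_abs_gaussian (|t| * C * τ)).const_mul
      (rexp ((|t| * C * r) * |x|)))) ?_ ?_
    · exact ((measurable_Haux ν t).comp (by fun_prop)).aestronglyMeasurable
    · filter_upwards with w
      rw [Real.norm_eq_abs, abs_of_pos (Haux_pos ν hC t _)]
      exact Haux_affine_le ν hC hC0 hr0.le hτpos.le x w
  have hslice' : ∀ x : ℝ, Integrable (fun w => (Haux ν t (r * x + τ * w)) ^ α)
      (gaussianReal 0 1) := by
    intro x
    refine Integrable.mono' (((integrable_exp_abs_gaussian (|t| * C * α * τ)).const_mul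
      (rexp ((|t| * C * α * r) * |x|)))) ?_ ?_
    · exact (hgm.comp (by fun_prop)).aestronglyMeasurable
    · filter_upwards with w
      rw [Real.norm_eq_abs, abs_of_nonneg (Real.rpow_nonneg (Haux_pos ν hC t _).le _)]
      exact Haux_rpow_affine_le ν hC hC0 hα0 hr0.le hτpos.le x w
  -- pointwise Jensen
  have hjensen : ∀ x : ℝ, (Haux ν (t * r) x) ^ α
      ≤ ∫ w, (Haux ν t (r * x + τ * w)) ^ α ∂(gaussianReal 0 1) := by
    intro x
    rw [key_H ν hC hτ2 x]
    refine ConvexOn.map_integral_le (convexOn_rpow (le_of_lt hα)) ?_ isClosed_Ici ?_ (hslice x) ?_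
    · exact (Real.continuous_rpow_const hα0).continuousOn
    · filter_upwards with w; exact (Haux_pos ν hC t _).le
    · exact hslice' x
  -- integrability of the double-integral function
  have hdm : Measurable (fun x => ∫ w, (Haux ν t (r * x + τ * w)) ^ α ∂(gaussianReal 0 1)) := by
    apply StronglyMeasurable.measurable
    apply StronglyMeasurable.integral_prod_right'
      (f := fun p : ℝ × ℝ => (Haux ν t (r * p.1 + τ * p.2)) ^ α)
    exact (hgm.comp (by fun_prop : Measurable fun p : ℝ × ℝ => r * p.1 + τ * p.2)).stronglyMeasurable
  have hdint : Integrable (fun x => ∫ w, (Haux ν t (r * x + τ * w)) ^ α ∂(gaussianReal 0 1))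
      (gaussianReal 0 1) := by
    set K : ℝ := ∫ w, rexp ((|t| * C * α * τ) * |w|) ∂(gaussianReal 0 1) with hK
    refine Integrable.mono' ((integrable_exp_abs_gaussian (|t| * C * α * r)).const_mul K) ?_ ?_
    · exact hdm.aestronglyMeasurable
    · filter_upwards with x
      rw [Real.norm_eq_abs, abs_of_nonneg (integral_nonneg fun w =>
        Real.rpow_nonneg (Haux_pos ν hC t _).le _)]
      calc ∫ w, (Haux ν t (r * x + τ * w)) ^ α ∂(gaussianReal 0 1)
          ≤ ∫ w, rexp ((|t| * C * α * r) * |x|) * rexp ((|t| * C * α * τ) * |w|)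
            ∂(gaussianReal 0 1) := by
            refine integral_mono (hslice' x) ?_ ?_
            · exact (integrable_exp_abs_gaussian (|t| * C * α * τ)).const_mul _
            · intro w; exact Haux_rpow_affine_le ν hC hC0 hα0 hr0.le hτpos.le x w
        _ = K * rexp ((|t| * C * α * r) * |x|) := by
            rw [integral_const_mul, hK]; ring
  -- conclude
  calc Gaux ν α (t * r) = ∫ x, (Haux ν (t * r) x) ^ α ∂(gaussianReal 0 1) := rfl
    _ ≤ ∫ x, ∫ w, (Haux ν t (r * x + τ * w)) ^ α ∂(gaussianReal 0 1) ∂(gaussianReal 0 1) := by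
        refine integral_mono_of_nonneg ?_ hdint (Filter.Eventually.of_forall hjensen)
        exact Filter.Eventually.of_forall fun x =>
          Real.rpow_nonneg (Haux_pos ν hC (t * r) _).le _
    _ = ∫ y, (Haux ν t y) ^ α ∂(gaussianReal 0 1) :=
        mix_bochner _ hgm (fun y => Real.rpow_nonneg (Haux_pos ν hC t _).le _) h1 hτpos
          (integrable_Haux_rpow ν hC hα0 t)
    _ = Gaux ν α t := rfl

end Mono

section Final
variable (ν : Measure ℝ) [IsProbabilityMeasure ν]

lemma ratio_eq {σ : ℝ} (hσ : 0 < σ) (m x : ℝ) :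
    gaussianPDFReal m ⟨σ ^ 2, sq_nonneg σ⟩ x / gaussianPDFReal 0 ⟨σ ^ 2, sq_nonneg σ⟩ x
      = rexp ((1/σ) * m * (x/σ) - (1/σ) ^ 2 * m ^ 2 / 2) := by
  have hσ2 : σ ^ 2 ≠ 0 := by positivity
  simp only [gaussianPDFReal, NNReal.coe_mk]
  dsimp only [NNReal.toReal]
  rw [mul_div_mul_left _ _ (by positivity : (√(2 * π * σ ^ 2))⁻¹ ≠ 0), ← Real.exp_sub]
  congr 1
  field_simp
  ring

lemma repr_eq {σ : ℝ} (hσ : 0 < σ) {α : ℝ} (hα0 : 0 ≤ α) :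
    (∫ x, ((∫ m, gaussianPDFReal m ⟨σ ^ 2, sq_nonneg σ⟩ x ∂ν) /
        gaussianPDFReal 0 ⟨σ ^ 2, sq_nonneg σ⟩ x) ^ α
      ∂(gaussianReal 0 ⟨σ ^ 2, sq_nonneg σ⟩)) = Gaux ν α (1/σ) := by
  have hV : (⟨σ ^ 2, sq_nonneg σ⟩ : ℝ≥0) ≠ 0 := by
    intro h
    have h2 := congrArg NNReal.toReal h
    exact (by positivity : (0:ℝ) < σ ^ 2).ne' h2
  have hpt : ∀ x : ℝ, (∫ m, gaussianPDFReal m ⟨σ ^ 2, sq_nonneg σ⟩ x ∂ν) /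
      gaussianPDFReal 0 ⟨σ ^ 2, sq_nonneg σ⟩ x = Haux ν (1/σ) (x/σ) := by
    intro x
    rw [div_eq_iff (gaussianPDFReal_pos 0 _ x hV).ne', Haux, ← integral_mul_const]
    apply integral_congr_ae
    filter_upwards with m
    rw [← ratio_eq hσ m x, div_mul_cancel₀]
    exact (gaussianPDFReal_pos 0 _ x hV).ne'
  simp_rw [hpt]
  have hmap : gaussianReal 0 (⟨σ ^ 2, sq_nonneg σ⟩ : ℝ≥0)
      = Measure.map (fun z => σ * z) (gaussianReal 0 1) := by
    rw [gaussianReal_map_const_mul σ]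
    norm_num
    rfl
  have hfm : AEStronglyMeasurable (fun x : ℝ => (Haux ν (1/σ) (x/σ)) ^ α)
      (Measure.map (fun z : ℝ => σ * z) (gaussianReal 0 1)) := by
    apply Measurable.aestronglyMeasurable
    exact (Real.continuous_rpow_const hα0).measurable.comp
      ((measurable_Haux ν (1/σ)).comp (measurable_id.div_const σ))
  rw [hmap, integral_map ((measurable_const_mul σ).aemeasurable :
    AEMeasurable (fun z : ℝ => σ * z) (gaussianReal 0 1)) hfm]
  apply integral_congr_ae
  filter_upwards with z
  rw [mul_comm σ z, mul_div_assoc, div_self hσ.ne', mul_one]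

end Final

/-- Monotonicity of the Rényi divergence of mean-shifted Gaussian mixtures in the noise
parameter: for a bounded mean distribution `ν` and `α > 1`, the map
`σ ↦ R_α(N(X, σ²), N(0, σ²))` is non-increasing on `(0, ∞)`. -/
theorem renyi_mixture_antitone_in_sigma (ν : Measure ℝ) [IsProbabilityMeasure ν]
    (hb : ∃ C : ℝ, ∀ᵐ m ∂ν, |m| ≤ C) (α : ℝ) (hα : 1 < α) :
    AntitoneOn (fun σ : ℝ =>
      (1 / (α - 1)) * Real.log (∫ x,
        ((∫ m, gaussianPDFReal m ⟨σ ^ 2, sq_nonneg σ⟩ x ∂ν) /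
          gaussianPDFReal 0 ⟨σ ^ 2, sq_nonneg σ⟩ x) ^ α
        ∂(gaussianReal 0 ⟨σ ^ 2, sq_nonneg σ⟩))) (Set.Ioi 0) := by
  obtain ⟨C₀, hb₀⟩ := hb
  have hC : ∀ᵐ m ∂ν, |m| ≤ |C₀| := hb₀.mono fun m h => h.trans (le_abs_self C₀)
  have hC0 : (0:ℝ) ≤ |C₀| := abs_nonneg _
  have hα0 : (0:ℝ) ≤ α := le_of_lt (lt_trans one_pos hα)
  have hmono : ∀ s t : ℝ, 0 < s → s ≤ t → Gaux ν α s ≤ Gaux ν α t := by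
    intro s t hs hst
    rcases eq_or_lt_of_le hst with h | h
    · rw [h]
    · have ht : 0 < t := hs.trans h
      have := Gaux_le ν hC hC0 hα ht (div_pos hs ht) ((div_lt_one ht).mpr h)
      rwa [mul_div_cancel₀ _ ht.ne'] at this
  intro σ₁ h1 σ₂ h2 hle
  simp only [Set.mem_Ioi] at h1 h2
  simp only
  rw [repr_eq ν h1 hα0, repr_eq ν h2 hα0]
  have hGle : Gaux ν α (1/σ₂) ≤ Gaux ν α (1/σ₁) :=
    hmono _ _ (by positivity) (one_div_le_one_div_of_le h1 hle)
  have hcoef : (0:ℝ) ≤ 1 / (α - 1) := by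
    have h : (0:ℝ) < α - 1 := by linarith
    positivity
  apply mul_le_mul_of_nonneg_left _ hcoef
  exact (Real.log_le_log_iff (Gaux_pos ν hC hα0 _) (Gaux_pos ν hC hα0 _)).mpr hGle
end
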